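/- arXiv:2002.11182 — 10 statements merged into one kernel-verified Lean document; each statement's English description precedes it below -/
import Mathlib

section
/- Let V ∈ ℝ^{d×d} be symmetric with V ⪰ I_d and let A ∈ ℝ^{d×m} be a matrix with operator norm ‖A‖₂ ≤ 1. Then for every w ∈ ℝ^d it holds that ‖Aᵀ V^{-1} w‖² ≤ 2 · log det(I_m + Aᵀ V^{-1} A) · (wᵀ V^{-1} w). -/
open Matrix

-- scalar lemma
lemma scalar_aux {x : ℝ} (h0 : 0 ≤ x) (h1 : x ≤ 1) : x ≤ 2 * Real.log (1 + x) := by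
  have hx : (0:ℝ) < 1 + x := by linarith
  have key : Real.exp (x / 2) ≤ 1 + x := by
    have hconv := convexOn_exp.2 (Set.mem_univ (0:ℝ)) (Set.mem_univ (1/2:ℝ))
      (show (0:ℝ) ≤ 1 - x by linarith) h0 (show (1-x)+x = 1 by ring)
    simp only [smul_eq_mul, mul_zero, zero_add, Real.exp_zero, mul_one] at hconv
    have he : Real.exp ((1:ℝ)/2) ≤ 2 := by
      rw [show (1:ℝ)/2 = 1/2 from rfl]
      have : Real.exp (1/2) = Real.sqrt (Real.exp 1) := by
        rw [← Real.exp_half]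
      rw [this]
      have h4 : Real.exp 1 ≤ 4 := by
        have := Real.exp_one_lt_d9
        linarith
      calc Real.sqrt (Real.exp 1) ≤ Real.sqrt 4 := Real.sqrt_le_sqrt h4
        _ = 2 := by
          rw [show (4:ℝ) = 2^2 by norm_num, Real.sqrt_sq (by norm_num)]
    have : x * ((1:ℝ)/2) = x / 2 := by ring
    rw [this] at hconv
    nlinarith [mul_le_mul_of_nonneg_left he h0]
  have := (Real.le_log_iff_exp_le hx).2 key
  linarith

lemma dp_self_nonneg {a : ℕ} (x : Fin a → ℝ) : 0 ≤ x ⬝ᵥ x :=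
  Finset.sum_nonneg fun i _ => mul_self_nonneg _

lemma dp_mul_self {a b : ℕ} (M : Matrix (Fin a) (Fin b) ℝ) (x : Fin b → ℝ) :
    x ⬝ᵥ ((Mᵀ * M) *ᵥ x) = (M *ᵥ x) ⬝ᵥ (M *ᵥ x) := by
  rw [← mulVec_mulVec, dotProduct_mulVec x Mᵀ, vecMul_transpose]

set_option linter.unusedVariables false in
lemma dp_sq_le {a : ℕ} (x y : Fin a → ℝ) : (x ⬝ᵥ y)^2 ≤ (x ⬝ᵥ x) * (y ⬝ᵥ y) := by
  have h := Finset.sum_mul_sq_le_sq_mul_sq Finset.univ x y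
  simpa [dotProduct, sq] using h

lemma transpose_contraction {d m : ℕ} (A : Matrix (Fin d) (Fin m) ℝ)
    (hA : ((1 : Matrix (Fin m) (Fin m) ℝ) - Aᵀ * A).PosSemidef) (y : Fin d → ℝ) :
    (Aᵀ *ᵥ y) ⬝ᵥ (Aᵀ *ᵥ y) ≤ y ⬝ᵥ y := by
  set z := Aᵀ *ᵥ y with hz
  have ht0 : 0 ≤ z ⬝ᵥ z := dp_self_nonneg z
  have hy0 : 0 ≤ y ⬝ᵥ y := dp_self_nonneg y
  have hAz : (A *ᵥ z) ⬝ᵥ (A *ᵥ z) ≤ z ⬝ᵥ z := by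
    have h := hA.dotProduct_mulVec_nonneg z
    simp only [star_trivial, sub_mulVec, one_mulVec, dotProduct_sub] at h
    rw [← dp_mul_self A z]
    linarith
  have hts : z ⬝ᵥ z = (A *ᵥ z) ⬝ᵥ y := by
    rw [hz]
    conv_lhs => rw [dotProduct_mulVec z Aᵀ, vecMul_transpose]
  have hcs : ((A *ᵥ z) ⬝ᵥ y)^2 ≤ ((A *ᵥ z) ⬝ᵥ (A *ᵥ z)) * (y ⬝ᵥ y) := dp_sq_le _ _
  nlinarith [hcs, hAz, hts, ht0, hy0]

lemma core_lemma {k : ℕ} (N : Matrix (Fin k) (Fin k) ℝ) (hN : N.PosSemidef)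
    (hN1 : ((1 : Matrix (Fin k) (Fin k) ℝ) - N).PosSemidef) (u : Fin k → ℝ) :
    u ⬝ᵥ (N *ᵥ u) ≤ 2 * Real.log ((1 + N).det) * (u ⬝ᵥ u) := by
  have hH := hN.isHermitian
  set U : Matrix (Fin k) (Fin k) ℝ :=
    (IsHermitian.eigenvectorUnitary hH : Matrix (Fin k) (Fin k) ℝ) with hUdef
  set ν := hH.eigenvalues with hν
  have hspec : N = U * diagonal ν * Uᵀ := by
    have h := hH.spectral_theorem
    rw [Unitary.conjStarAlgAut_apply, star_eq_conjTranspose, conjTranspose_eq_transpose_of_trivial] at h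
    simpa [RCLike.ofReal_real_eq_id] using h
  have hUU : U * Uᵀ = 1 := by
    have := mem_unitaryGroup_iff.mp (IsHermitian.eigenvectorUnitary hH).2
    rwa [star_eq_conjTranspose, conjTranspose_eq_transpose_of_trivial] at this
  -- eigenvalue bounds
  have hν0 : ∀ i, 0 ≤ ν i := hN.eigenvalues_nonneg
  have hν1 : ∀ i, ν i ≤ 1 := by
    intro i
    set v : Fin k → ℝ := ⇑(hH.eigenvectorBasis i) with hv
    have hvv : v ⬝ᵥ v = 1 := by
      have h := hH.eigenvectorBasis.orthonormal.1 i
      have h2 : (inner ℝ (hH.eigenvectorBasis i) (hH.eigenvectorBasis i) : ℝ) = 1 := by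
        rw [real_inner_self_eq_norm_sq, h]; norm_num
      rw [EuclideanSpace.inner_eq_star_dotProduct, star_trivial] at h2
      exact h2
    have hev : ν i = v ⬝ᵥ (N *ᵥ v) := by
      have := hH.eigenvalues_eq i
      simpa using this
    have hp := hN1.dotProduct_mulVec_nonneg v
    simp only [star_trivial, sub_mulVec, one_mulVec, dotProduct_sub] at hp
    rw [hvv] at hp
    linarith [hev ▸ hp]
  -- determinant
  have hdet : (1 + N).det = ∏ i, (1 + ν i) := by
    have h1 : (1 : Matrix (Fin k) (Fin k) ℝ) + N = U * (1 + diagonal ν) * Uᵀ := by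
      rw [mul_add, mul_one, add_mul, hUU, ← hspec]
    have hdU : U.det * Uᵀ.det = 1 := by
      rw [← det_mul, hUU, det_one]
    rw [h1, det_mul, det_mul]
    rw [show U.det * (1 + diagonal ν).det * Uᵀ.det
        = (1 + diagonal ν).det * (U.det * Uᵀ.det) by ring, hdU, mul_one,
      ← diagonal_one, diagonal_add, det_diagonal]
  -- coordinates
  set c : Fin k → ℝ := Uᵀ *ᵥ u with hc
  have hq : u ⬝ᵥ (N *ᵥ u) = ∑ i, ν i * (c i * c i) := by
    rw [hspec, ← mulVec_mulVec, ← mulVec_mulVec, dotProduct_mulVec u U, ← mulVec_transpose, ← hc]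
    simp only [dotProduct, mulVec_diagonal]
    exact Finset.sum_congr rfl fun i _ => by ring
  have hq2 : u ⬝ᵥ u = ∑ i, c i * c i := by
    have h := dp_mul_self Uᵀ u
    rw [transpose_transpose, hUU, one_mulVec] at h
    rw [h, ← hc]
    rfl
  -- each eigenvalue is at most 2 log det
  have hlogpos : ∀ i, 0 ≤ Real.log (1 + ν i) := fun i =>
    Real.log_nonneg (by linarith [hν0 i])
  have hlogdet : Real.log ((1 + N).det) = ∑ i, Real.log (1 + ν i) := by
    rw [hdet, Real.log_prod]
    exact fun i _ => by have := hν0 i; positivity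
  have hkey : ∀ j, ν j ≤ 2 * Real.log ((1 + N).det) := by
    intro j
    have h1 : Real.log (1 + ν j) ≤ ∑ i, Real.log (1 + ν i) :=
      Finset.single_le_sum (fun i _ => hlogpos i) (Finset.mem_univ j)
    have h2 := scalar_aux (hν0 j) (hν1 j)
    rw [hlogdet]
    linarith
  -- combine
  rw [hq, hq2, Finset.mul_sum]
  apply Finset.sum_le_sum
  intro i _
  have := mul_le_mul_of_nonneg_right (hkey i) (mul_self_nonneg (c i))
  linarith

/-- For a symmetric matrix `V ⪰ I_d` and a `d × m` matrix `A` with operator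
norm at most `1` (encoded as `AᵀA ⪯ I_m`), every `w ∈ ℝ^d` satisfies
`‖Aᵀ V⁻¹ w‖² ≤ 2 * log det (I_m + Aᵀ V⁻¹ A) * (wᵀ V⁻¹ w)`. -/
theorem stmt2 (d m : ℕ) (V : Matrix (Fin d) (Fin d) ℝ) (hVsymm : V.IsHermitian)
    (hVI : (V - (1 : Matrix (Fin d) (Fin d) ℝ)).PosSemidef)
    (A : Matrix (Fin d) (Fin m) ℝ)
    (hA : ((1 : Matrix (Fin m) (Fin m) ℝ) - Aᵀ * A).PosSemidef)
    (w : Fin d → ℝ) :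
    (Aᵀ *ᵥ (V⁻¹ *ᵥ w)) ⬝ᵥ (Aᵀ *ᵥ (V⁻¹ *ᵥ w)) ≤
      2 * Real.log (Matrix.det ((1 : Matrix (Fin m) (Fin m) ℝ) + Aᵀ * V⁻¹ * A)) *
        (w ⬝ᵥ (V⁻¹ *ᵥ w)) := by
  have hVt : Vᵀ = V := by
    have := hVsymm
    rwa [IsHermitian, conjTranspose_eq_transpose_of_trivial] at this
  have hVpd : V.PosDef := by
    refine PosDef.of_dotProduct_mulVec_pos hVsymm (fun x hx => ?_)
    have h1 := hVI.dotProduct_mulVec_nonneg x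
    simp only [star_trivial, sub_mulVec, one_mulVec, dotProduct_sub] at h1 ⊢
    have h2 : 0 < x ⬝ᵥ x := by
      rcases (dp_self_nonneg x).lt_or_eq with h | h
      · exact h
      · exfalso
        apply hx
        have : star x ⬝ᵥ x = 0 := by simpa [star_trivial] using h.symm
        exact dotProduct_star_self_eq_zero.mp this
    linarith
  have hdetV : IsUnit V.det := hVpd.det_pos.ne'.isUnit
  have hVinv : V⁻¹.PosDef := hVpd.inv
  have hW : V⁻¹.PosSemidef := hVinv.posSemidef
  open scoped MatrixOrder in
  set S : Matrix (Fin d) (Fin d) ℝ := CFC.sqrt V⁻¹ with hSdef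
  open scoped MatrixOrder in
  have hSpsd : S.PosSemidef := (CFC.sqrt_nonneg V⁻¹).posSemidef
  open scoped MatrixOrder in
  have hSS : S * S = V⁻¹ := CFC.sqrt_mul_sqrt_self V⁻¹ hW.nonneg
  have hSt : Sᵀ = S := by
    have := hSpsd.isHermitian
    rwa [IsHermitian, conjTranspose_eq_transpose_of_trivial] at this
  -- 1 - V⁻¹ is PSD
  have hVinvle : ∀ x : Fin d → ℝ, x ⬝ᵥ (V⁻¹ *ᵥ x) ≤ x ⬝ᵥ x := by
    intro x
    set z : Fin d → ℝ := V⁻¹ *ᵥ x with hz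
    have hx : x = V *ᵥ z := by
      rw [hz, mulVec_mulVec, mul_nonsing_inv V hdetV, one_mulVec]
    have hlhs : x ⬝ᵥ (V⁻¹ *ᵥ x) = z ⬝ᵥ (V *ᵥ z) := by
      rw [← hz]
      conv_lhs => rw [hx]
      exact dotProduct_comm _ _
    have hrhs : x ⬝ᵥ x = z ⬝ᵥ ((V * V) *ᵥ z) := by
      conv_lhs => rw [hx]
      rw [← dp_mul_self V z, hVt]
    have hdecomp : V * V - V = (V - 1)ᵀ * (V - 1) + (V - 1) := by
      rw [transpose_sub, transpose_one, hVt]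
      noncomm_ring
    have h1 : 0 ≤ z ⬝ᵥ (((V - 1)ᵀ * (V - 1)) *ᵥ z) := by
      rw [dp_mul_self]; exact dp_self_nonneg _
    have h2 : 0 ≤ z ⬝ᵥ ((V - 1) *ᵥ z) := by simpa [star_trivial] using hVI.dotProduct_mulVec_nonneg z
    have h3 : 0 ≤ z ⬝ᵥ ((V * V - V) *ᵥ z) := by
      rw [hdecomp, add_mulVec, dotProduct_add]
      exact add_nonneg h1 h2
    rw [sub_mulVec, dotProduct_sub] at h3
    linarith [hlhs, hrhs]
  -- set up B and N
  set B : Matrix (Fin m) (Fin d) ℝ := Aᵀ * S with hB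
  set N : Matrix (Fin d) (Fin d) ℝ := Bᵀ * B with hN
  have hNpsd : N.PosSemidef := by
    have h := Matrix.posSemidef_conjTranspose_mul_self B
    rwa [conjTranspose_eq_transpose_of_trivial] at h
  have hBt : Bᵀ = S * A := by
    rw [hB, transpose_mul, transpose_transpose, hSt]
  have hN1 : ((1 : Matrix (Fin d) (Fin d) ℝ) - N).PosSemidef := by
    refine PosSemidef.of_dotProduct_mulVec_nonneg ?_ ?_
    · exact (isHermitian_one).sub hNpsd.isHermitian
    · intro x
      simp only [star_trivial, sub_mulVec, one_mulVec, dotProduct_sub]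
      have e1 : x ⬝ᵥ (N *ᵥ x) = (B *ᵥ x) ⬝ᵥ (B *ᵥ x) := by rw [hN, dp_mul_self]
      have e2 : B *ᵥ x = Aᵀ *ᵥ (S *ᵥ x) := by rw [hB, ← mulVec_mulVec]
      have e3 : (S *ᵥ x) ⬝ᵥ (S *ᵥ x) = x ⬝ᵥ (V⁻¹ *ᵥ x) := by
        rw [← dp_mul_self S x, hSt, hSS]
      have := transpose_contraction A hA (S *ᵥ x)
      have := hVinvle x
      rw [e1, e2]
      linarith [transpose_contraction A hA (S *ᵥ x), hVinvle x, e3.le, e3.ge]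
  -- determinant identity
  have hBBt : B * Bᵀ = Aᵀ * V⁻¹ * A := by
    rw [hBt, hB, Matrix.mul_assoc, ← Matrix.mul_assoc S S A, hSS, ← Matrix.mul_assoc]
  have hdet : ((1 : Matrix (Fin m) (Fin m) ℝ) + Aᵀ * V⁻¹ * A).det
      = ((1 : Matrix (Fin d) (Fin d) ℝ) + N).det := by
    rw [← hBBt, det_one_add_mul_comm, hN]
  -- vector identities
  set u : Fin d → ℝ := S *ᵥ w with hu
  have hvec : Aᵀ *ᵥ (V⁻¹ *ᵥ w) = B *ᵥ u := by
    rw [hu, hB, ← hSS, ← mulVec_mulVec, mulVec_mulVec]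
  have hlhs : (Aᵀ *ᵥ (V⁻¹ *ᵥ w)) ⬝ᵥ (Aᵀ *ᵥ (V⁻¹ *ᵥ w)) = u ⬝ᵥ (N *ᵥ u) := by
    rw [hvec, hN, dp_mul_self]
  have hrhs : w ⬝ᵥ (V⁻¹ *ᵥ w) = u ⬝ᵥ u := by
    rw [hu, ← dp_mul_self S w, hSt, hSS]
  rw [hlhs, hrhs, hdet]
  exact core_lemma N hNpsd hN1 u
end

section
/- Suppose X ⊂ ℝ^d is a finite nonempty action set, each x ∈ X has an observation matrix A_x ∈ ℝ^{d×m} with ‖A_x‖₂ ≤ 1, V ∈ ℝ^{d×d} is symmetric positive definite with V ⪰ I_d, θ̂ ∈ ℝ^d, β > 0, and α > 0 is such that for every v ∈ ℝ^d and every x, y ∈ X there exists z ∈ X with ⟨x−y, v⟩² ≤ α·‖A_zᵀ v‖². Let x̂* ∈ X be a maximizer of ⟨x, θ̂⟩ over X. Then Δ(x̂*)² ≤ 2·α·β·max_{z∈X} I(z), where Δ(x) = max_{y∈X} (⟨y−x, θ̂⟩ + √β·‖y−x‖_{V^{-1}}) and I(z) = log det(I_m + A_zᵀ V^{-1} A_z).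 -/
open Matrix Finset

private lemma auxLog {t : ℝ} (h0 : 0 ≤ t) (h1 : t ≤ 1) : t / 2 ≤ Real.log (1 + t) := by
  have hpos : (0:ℝ) < 1 + t := by linarith
  have h2 := Real.log_le_sub_one_of_pos (x := (1 + t)⁻¹) (by positivity)
  rw [Real.log_inv] at h2
  have h3 : 1 - (1 + t)⁻¹ ≤ Real.log (1 + t) := by linarith
  have h4 : 1 - (1 + t)⁻¹ = t / (1 + t) := by field_simp; ring
  have h5 : t / 2 ≤ t / (1 + t) := by
    rw [div_le_div_iff₀ (by norm_num) hpos]; nlinarith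
  linarith [h4 ▸ h3]

private lemma quadNonneg {n : ℕ} {P : Matrix (Fin n) (Fin n) ℝ} (hP : P.PosSemidef)
    (x : Fin n → ℝ) : 0 ≤ x ⬝ᵥ (P *ᵥ x) := by
  simpa using hP.dotProduct_mulVec_nonneg x

private lemma dotSelfNonneg {n : ℕ} (u : Fin n → ℝ) : 0 ≤ u ⬝ᵥ u :=
  Finset.sum_nonneg fun i _ => mul_self_nonneg (u i)

private lemma vPosDef {n : ℕ} {V : Matrix (Fin n) (Fin n) ℝ}
    (hVI : (V - 1).PosSemidef) : V.PosDef := by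
  have h := Matrix.PosDef.posSemidef_add hVI (Matrix.PosDef.one (n := Fin n) (R := ℝ))
  simpa using h

private lemma contraction {n : ℕ} {V : Matrix (Fin n) (Fin n) ℝ}
    (hVI : (V - 1).PosSemidef) (u : Fin n → ℝ) :
    u ⬝ᵥ (V⁻¹ *ᵥ u) ≤ u ⬝ᵥ u := by
  have hVpd : V.PosDef := vPosDef hVI
  have hVinv : (V⁻¹).PosDef := hVpd.inv
  set p := V⁻¹ *ᵥ u with hp
  have hup : V *ᵥ p = u := by
    rw [hp, Matrix.mulVec_mulVec, Matrix.mul_nonsing_inv _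
      (isUnit_iff_ne_zero.mpr hVpd.det_pos.ne'), Matrix.one_mulVec]
  have hq0 : 0 ≤ u ⬝ᵥ p := quadNonneg hVinv.posSemidef u
  have hpp : p ⬝ᵥ p ≤ u ⬝ᵥ p := by
    have h := quadNonneg hVI p
    rw [Matrix.sub_mulVec, dotProduct_sub, Matrix.one_mulVec] at h
    have h2 : u ⬝ᵥ p = p ⬝ᵥ (V *ᵥ p) := by rw [← hup, dotProduct_comm]
    linarith
  have hcs : (u ⬝ᵥ p)^2 ≤ (u ⬝ᵥ u) * (p ⬝ᵥ p) := by
    have := Finset.sum_mul_sq_le_sq_mul_sq Finset.univ u p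
    simpa only [dotProduct, ← pow_two] using this
  have huu : 0 ≤ u ⬝ᵥ u := dotSelfNonneg u
  nlinarith [hcs, hpp, hq0, huu]

open scoped MatrixOrder in
private lemma psdCS {n : ℕ} {P : Matrix (Fin n) (Fin n) ℝ} (hP : P.PosSemidef)
    (a b : Fin n → ℝ) : (a ⬝ᵥ (P *ᵥ b))^2 ≤ (a ⬝ᵥ (P *ᵥ a)) * (b ⬝ᵥ (P *ᵥ b)) := by
  have hST : (CFC.sqrt P)ᵀ = CFC.sqrt P := by
    rw [← Matrix.conjTranspose_eq_transpose_of_trivial]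
    exact (CFC.sqrt_nonneg P).posSemidef.1
  have key : ∀ x y : Fin n → ℝ, x ⬝ᵥ (P *ᵥ y) = (CFC.sqrt P *ᵥ x) ⬝ᵥ (CFC.sqrt P *ᵥ y) := by
    intro x y
    conv_lhs => rw [← CFC.sqrt_mul_sqrt_self P hP.nonneg]
    rw [← Matrix.mulVec_mulVec, Matrix.dotProduct_mulVec]
    congr 1
    conv_lhs => rw [← hST]
    exact Matrix.vecMul_transpose _ _
  rw [key a b, key a a, key b b]
  have := Finset.sum_mul_sq_le_sq_mul_sq Finset.univ (CFC.sqrt P *ᵥ a) (CFC.sqrt P *ᵥ b)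
  simpa only [dotProduct, ← pow_two] using this

private lemma diagEntry {d m : ℕ} (P : Matrix (Fin d) (Fin d) ℝ) (B : Matrix (Fin d) (Fin m) ℝ)
    (j : Fin m) : (Bᵀ * P * B) j j = (fun i => B i j) ⬝ᵥ (P *ᵥ fun i => B i j) := by
  simp only [Matrix.mul_apply, Matrix.transpose_apply, dotProduct, Matrix.mulVec,
    dotProduct, Finset.sum_mul, Finset.mul_sum]
  rw [Finset.sum_comm]
  apply Finset.sum_congr rfl; intro i _
  apply Finset.sum_congr rfl; intro k _
  ring

private lemma traceDet {n : ℕ} {M : Matrix (Fin n) (Fin n) ℝ} (hM : M.IsHermitian)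
    (hMpsd : M.PosSemidef) (h1M : ((1 : Matrix (Fin n) (Fin n) ℝ) - M).PosSemidef) :
    0 ≤ Real.log (Matrix.det (1 + M)) ∧
      M.trace ≤ 2 * Real.log (Matrix.det (1 + M)) := by
  have hev0 : ∀ i, 0 ≤ hM.eigenvalues i := hMpsd.eigenvalues_nonneg
  have hev1 : ∀ i, hM.eigenvalues i ≤ 1 := by
    intro i
    set u : Fin n → ℝ := ⇑(hM.eigenvectorBasis i) with hu
    have hnorm : star u ⬝ᵥ u = 1 := by
      have h1 : (inner ℝ (hM.eigenvectorBasis i) (hM.eigenvectorBasis i) : ℝ) = 1 := by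
        rw [real_inner_self_eq_norm_sq, hM.eigenvectorBasis.orthonormal.1 i]; norm_num
      rw [← h1, EuclideanSpace.inner_eq_star_dotProduct]
      exact dotProduct_comm _ _
    have hval : hM.eigenvalues i = star u ⬝ᵥ (M *ᵥ u) := by
      simpa using hM.eigenvalues_eq i
    have h := h1M.dotProduct_mulVec_nonneg u
    rw [Matrix.sub_mulVec, dotProduct_sub, Matrix.one_mulVec, hnorm] at h
    linarith [hval ▸ h]
  have hU := hM.spectral_theorem
  have htr : M.trace = ∑ i, hM.eigenvalues i := by
    conv_lhs => rw [hU]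
    rw [Unitary.conjStarAlgAut_apply]
    rw [Matrix.trace_mul_cycle]
    rw [Unitary.coe_star_mul_self, Matrix.one_mul, Matrix.trace_diagonal]
    simp
  have hUU : (hM.eigenvectorUnitary : Matrix (Fin n) (Fin n) ℝ) *
      (star hM.eigenvectorUnitary : Matrix (Fin n) (Fin n) ℝ) = 1 :=
    (Matrix.mem_unitaryGroup_iff).mp hM.eigenvectorUnitary.2
  have hdet : Matrix.det (1 + M) = ∏ i, (1 + hM.eigenvalues i) := by
    have h1 : (1 : Matrix (Fin n) (Fin n) ℝ) + M =
        (hM.eigenvectorUnitary : Matrix (Fin n) (Fin n) ℝ) *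
          (1 + Matrix.diagonal (RCLike.ofReal ∘ hM.eigenvalues)) *
          (star hM.eigenvectorUnitary : Matrix (Fin n) (Fin n) ℝ) := by
      rw [Matrix.mul_add, Matrix.add_mul, Matrix.mul_one, hUU]
      conv_lhs => rw [hU, Unitary.conjStarAlgAut_apply]
    rw [h1, Matrix.det_mul_right_comm, hUU, Matrix.one_mul]
    rw [← Matrix.diagonal_one, Matrix.diagonal_add, Matrix.det_diagonal]
    simp [Pi.add_apply]
  have hfac : ∀ i : Fin n, (1:ℝ) ≤ 1 + hM.eigenvalues i := fun i => by linarith [hev0 i]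
  have hlog : Real.log (Matrix.det (1 + M)) = ∑ i, Real.log (1 + hM.eigenvalues i) := by
    rw [hdet, Real.log_prod]
    intro i _
    linarith [hfac i]
  constructor
  · rw [hlog]
    exact Finset.sum_nonneg fun i _ => Real.log_nonneg (hfac i)
  · rw [hlog, htr, Finset.mul_sum]
    apply Finset.sum_le_sum
    intro i _
    have h2 : hM.eigenvalues i / 2 ≤ Real.log (1 + hM.eigenvalues i) := by
      have hpos : (0:ℝ) < 1 + hM.eigenvalues i := by linarith [hev0 i]
      have h2' := Real.log_le_sub_one_of_pos (x := (1 + hM.eigenvalues i)⁻¹) (by positivity)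
      rw [Real.log_inv] at h2'
      nlinarith [hev0 i, hev1 i, mul_pos hpos (inv_pos.mpr hpos),
        mul_inv_cancel₀ hpos.ne']
    linarith

set_option maxHeartbeats 1000000 in
/-- **Lemma 3 of the paper.** In a globally observable game with worst-case
alignment constant `α`, the greedy action `xs` satisfies
`Δ(xs)² ≤ 2 α β max_{z ∈ X} I(z)`, where
`Δ(x) = max_{y ∈ X} (⟨y - x, θ̂⟩ + √β ‖y - x‖_{V⁻¹})` and
`I(z) = log det (I_m + A_zᵀ V⁻¹ A_z)`. -/
theorem stmt3 (d m : ℕ) (X : Finset (Fin d → ℝ)) (hX : X.Nonempty)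
    (A : (Fin d → ℝ) → Matrix (Fin d) (Fin m) ℝ)
    (hA : ∀ x ∈ X, ((1 : Matrix (Fin m) (Fin m) ℝ) - (A x)ᵀ * A x).PosSemidef)
    (V : Matrix (Fin d) (Fin d) ℝ) (hVsymm : V.IsHermitian)
    (hVI : (V - (1 : Matrix (Fin d) (Fin d) ℝ)).PosSemidef)
    (θ : Fin d → ℝ) (β : ℝ) (hβ : 0 < β) (α : ℝ) (hα : 0 < α)
    (halign : ∀ v : Fin d → ℝ, ∀ x ∈ X, ∀ y ∈ X, ∃ z ∈ X,
      ((x - y) ⬝ᵥ v) ^ 2 ≤ α * (((A z)ᵀ *ᵥ v) ⬝ᵥ ((A z)ᵀ *ᵥ v)))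
    (xs : Fin d → ℝ) (hxs : xs ∈ X) (hgreedy : ∀ y ∈ X, y ⬝ᵥ θ ≤ xs ⬝ᵥ θ) :
    (X.sup' hX fun y =>
        (y - xs) ⬝ᵥ θ + Real.sqrt β * Real.sqrt ((y - xs) ⬝ᵥ (V⁻¹ *ᵥ (y - xs)))) ^ 2 ≤
      2 * α * β *
        X.sup' hX fun z =>
          Real.log (Matrix.det ((1 : Matrix (Fin m) (Fin m) ℝ) + (A z)ᵀ * V⁻¹ * A z)) := by
  have hVpd : V.PosDef := vPosDef hVI
  have hVinvpsd : (V⁻¹).PosSemidef := hVpd.inv.posSemidef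
  set f : (Fin d → ℝ) → ℝ := fun y =>
    (y - xs) ⬝ᵥ θ + Real.sqrt β * Real.sqrt ((y - xs) ⬝ᵥ (V⁻¹ *ᵥ (y - xs))) with hf
  set g : (Fin d → ℝ) → ℝ := fun z =>
    Real.log (Matrix.det ((1 : Matrix (Fin m) (Fin m) ℝ) + (A z)ᵀ * V⁻¹ * A z)) with hg
  obtain ⟨y, hy, hfy⟩ := Finset.exists_mem_eq_sup' hX f
  set S := X.sup' hX f with hS
  have hS0 : 0 ≤ S := by
    have h1 : f xs ≤ S := Finset.le_sup' f hxs
    have h2 : f xs = 0 := by simp [hf]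
    linarith
  set w : Fin d → ℝ := y - xs with hw
  set q : ℝ := w ⬝ᵥ (V⁻¹ *ᵥ w) with hq
  have hq0 : 0 ≤ q := quadNonneg hVinvpsd w
  -- S ≤ √β √q
  have hfyle : S ≤ Real.sqrt β * Real.sqrt q := by
    rw [hfy, hf]
    have h3 : (y - xs) ⬝ᵥ θ ≤ 0 := by
      rw [sub_dotProduct]
      linarith [hgreedy y hy]
    simp only []
    linarith
  have hS2 : S ^ 2 ≤ β * q := by
    have h4 : S ^ 2 ≤ (Real.sqrt β * Real.sqrt q) ^ 2 := pow_le_pow_left₀ hS0 hfyle 2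
    have h5 : (Real.sqrt β * Real.sqrt q) ^ 2 = β * q := by
      rw [mul_pow, Real.sq_sqrt hβ.le, Real.sq_sqrt hq0]
    linarith
  -- alignment
  obtain ⟨z, hz, hzq⟩ := halign (V⁻¹ *ᵥ w) y hy xs hxs
  rw [← hw, ← hq] at hzq
  set B := A z with hB
  set v : Fin d → ℝ := V⁻¹ *ᵥ w with hv
  set M : Matrix (Fin m) (Fin m) ℝ := Bᵀ * V⁻¹ * B with hM
  -- column CS bound
  have hBt : Bᵀᴴ = B := by
    rw [Matrix.conjTranspose_eq_transpose_of_trivial, Matrix.transpose_transpose]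
  have hsum : (Bᵀ *ᵥ v) ⬝ᵥ (Bᵀ *ᵥ v) ≤ M.trace * q := by
    have h6 : ∀ j : Fin m, ((Bᵀ *ᵥ v) j) ^ 2 ≤ M j j * q := by
      intro j
      have h7 : (Bᵀ *ᵥ v) j = (fun i => B i j) ⬝ᵥ (V⁻¹ *ᵥ w) := by
        simp [Matrix.mulVec, dotProduct, hv]
      have h8 := psdCS hVinvpsd (fun i => B i j) w
      rw [hM, diagEntry]
      rw [h7]
      exact h8
    have h9 : (Bᵀ *ᵥ v) ⬝ᵥ (Bᵀ *ᵥ v) = ∑ j, ((Bᵀ *ᵥ v) j) ^ 2 := by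
      simp [dotProduct, pow_two]
    rw [h9, Matrix.trace, Finset.sum_mul]
    exact Finset.sum_le_sum fun j _ => h6 j
  -- M facts
  have hMher : M.IsHermitian := by
    have := Matrix.isHermitian_mul_mul_conjTranspose Bᵀ (hVsymm.inv)
    rwa [hBt] at this
  have hMpsd : M.PosSemidef := by
    have := hVinvpsd.conjTranspose_mul_mul_same B
    rwa [Matrix.conjTranspose_eq_transpose_of_trivial] at this
  have hquad : ∀ x : Fin m → ℝ, x ⬝ᵥ (M *ᵥ x) = (B *ᵥ x) ⬝ᵥ (V⁻¹ *ᵥ (B *ᵥ x)) := by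
    intro x
    rw [hM, ← Matrix.mulVec_mulVec, ← Matrix.mulVec_mulVec, Matrix.dotProduct_mulVec x Bᵀ,
      Matrix.vecMul_transpose]
  have hBB : ∀ x : Fin m → ℝ, x ⬝ᵥ ((Bᵀ * B) *ᵥ x) = (B *ᵥ x) ⬝ᵥ (B *ᵥ x) := by
    intro x
    rw [← Matrix.mulVec_mulVec, Matrix.dotProduct_mulVec x Bᵀ, Matrix.vecMul_transpose]
  have h1M : ((1 : Matrix (Fin m) (Fin m) ℝ) - M).PosSemidef := by
    refine Matrix.PosSemidef.of_dotProduct_mulVec_nonneg ?_ ?_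
    · exact (Matrix.isHermitian_one).sub hMher
    · intro x
      have hx : star x = x := by simp
      rw [hx, Matrix.sub_mulVec, dotProduct_sub, Matrix.one_mulVec, hquad x]
      have e2 := contraction hVI (B *ᵥ x)
      have e3 := quadNonneg (hA z hz) x
      rw [Matrix.sub_mulVec, dotProduct_sub, Matrix.one_mulVec, hBB x] at e3
      linarith
  obtain ⟨hlog0, htr2⟩ := traceDet hMher hMpsd h1M
  -- combine
  have hkey : q ≤ 2 * α * Real.log (Matrix.det (1 + M)) := by
    rcases eq_or_lt_of_le hq0 with h | h
    · nlinarith [hlog0]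
    · -- q > 0
      have h10 : q ^ 2 ≤ α * (M.trace * q) :=
        le_trans hzq (by nlinarith [hsum])
      have h11 : q ≤ α * M.trace := by nlinarith [h10]
      nlinarith [htr2]
  have hgzle : g z ≤ X.sup' hX g := Finset.le_sup' g hz
  have hgz : g z = Real.log (Matrix.det (1 + M)) := by rw [hg]
  calc S ^ 2 ≤ β * q := hS2
    _ ≤ β * (2 * α * Real.log (Matrix.det (1 + M))) := by nlinarith [hkey]
    _ = 2 * α * β * g z := by rw [hgz]; ring
    _ ≤ 2 * α * β * X.sup' hX g := by
        have := mul_le_mul_of_nonneg_left hgzle (by positivity : (0:ℝ) ≤ 2 * α * β)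
        linarith
end

section
/- Suppose X ⊂ ℝ^d is a finite nonempty action set, each x ∈ X has an observation matrix A_x ∈ ℝ^{d×m} with ‖A_x‖₂ ≤ 1, V ∈ ℝ^{d×d} is symmetric positive definite with V ⪰ I_d, θ̂ ∈ ℝ^d, β > 0, and α > 0 is such that for every v ∈ ℝ^d and every x, y ∈ X there exists z ∈ X with ⟨x−y, v⟩² ≤ α·‖A_zᵀ v‖². Define the truncated gap Δ̄(x) = min{1, max_{y∈X} (⟨y−x, θ̂⟩ + √β·‖y−x‖_{V^{-1}})} and the information gain I(x) = log det(I_m + A_xᵀ V^{-1} A_x), extended to probability distributions μ on X by Δ̄(μ) = Σ_{x∈X} μ(x)·Δ̄(x) and I(μ) = Σ_{x∈X} μ(x)·I(x). If μ is a probability distribution on X that minimizes the information ratio, in the sense that Δ̄(μ)²·I(ν) ≤ Δ̄(ν)²·I(μ) for every probability distribution ν on X, then Δ̄(μ)³ ≤ 16·α·β·I(μ). -/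
open Matrix Finset

private lemma prod_one_add_ge {ι : Type*} (s : Finset ι) (f : ι → ℝ)
    (hf : ∀ i ∈ s, 0 ≤ f i) : 1 + ∑ i ∈ s, f i ≤ ∏ i ∈ s, (1 + f i) := by
  classical
  induction s using Finset.cons_induction with
  | empty => simp
  | cons a s ha ih =>
    rw [Finset.sum_cons, Finset.prod_cons]
    have h1 := hf a (Finset.mem_cons_self a s)
    have h2 : ∀ i ∈ s, 0 ≤ f i := fun i hi => hf i (Finset.mem_cons_of_mem hi)
    have h3 := ih h2
    have h4 : 0 ≤ ∑ i ∈ s, f i := Finset.sum_nonneg h2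
    nlinarith

private lemma cs_psd {n : ℕ} (M : Matrix (Fin n) (Fin n) ℝ) (hM : M.PosSemidef)
    (x y : Fin n → ℝ) : (x ⬝ᵥ M *ᵥ y) ^ 2 ≤ (x ⬝ᵥ M *ᵥ x) * (y ⬝ᵥ M *ᵥ y) := by
  have hq : ∀ v : Fin n → ℝ, 0 ≤ v ⬝ᵥ M *ᵥ v := fun v => by simpa using hM.dotProduct_mulVec_nonneg v
  have hMt : Mᵀ = M := by
    have h : Mᴴ = M := hM.1
    rwa [Matrix.conjTranspose_eq_transpose_of_trivial] at h
  have hsym : ∀ a b : Fin n → ℝ, a ⬝ᵥ M *ᵥ b = b ⬝ᵥ M *ᵥ a := by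
    intro a b
    conv_lhs => rw [← hMt]
    rw [Matrix.mulVec_transpose, dotProduct_comm, ← Matrix.dotProduct_mulVec]
  rcases eq_or_lt_of_le (hq y) with hb | hb
  · have h0 : M *ᵥ y = 0 := by
      rw [← hM.dotProduct_mulVec_zero_iff y]
      simpa using hb.symm
    simp [h0]
  · have key := hq ((y ⬝ᵥ M *ᵥ y) • x - (x ⬝ᵥ M *ᵥ y) • y)
    simp only [Matrix.mulVec_smul, Matrix.mulVec_sub, sub_dotProduct,
      smul_dotProduct, dotProduct_sub, dotProduct_smul,
      smul_eq_mul] at key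
    rw [hsym y x] at key
    nlinarith [key, hb]

private lemma det_one_add_trace {n : ℕ} (N : Matrix (Fin n) (Fin n) ℝ) (hN : N.PosSemidef) :
    1 + N.trace ≤ ((1 : Matrix (Fin n) (Fin n) ℝ) + N).det := by
  classical
  have hH := hN.1
  set U : Matrix (Fin n) (Fin n) ℝ := ↑hH.eigenvectorUnitary with hU
  have hU1 : U * star U = 1 := (Matrix.mem_unitaryGroup_iff).mp hH.eigenvectorUnitary.2
  have hU2 : star U * U = 1 := (Matrix.mem_unitaryGroup_iff').mp hH.eigenvectorUnitary.2
  have hspec : N = U * Matrix.diagonal hH.eigenvalues * star U := by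
    have := hH.spectral_theorem
    simpa [RCLike.ofReal_real_eq_id] using this
  have hdiag : (1 : Matrix (Fin n) (Fin n) ℝ) + Matrix.diagonal hH.eigenvalues
      = Matrix.diagonal (fun i => 1 + hH.eigenvalues i) := by
    rw [← Matrix.diagonal_one, Matrix.diagonal_add]
  have h1N : (1 : Matrix (Fin n) (Fin n) ℝ) + N
      = U * (Matrix.diagonal (fun i => 1 + hH.eigenvalues i)) * star U := by
    rw [← hdiag, Matrix.mul_add, Matrix.add_mul, Matrix.mul_one, hU1, ← hspec]
  have hdet : ((1 : Matrix (Fin n) (Fin n) ℝ) + N).det = ∏ i, (1 + hH.eigenvalues i) := by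
    rw [h1N, Matrix.det_mul, Matrix.det_mul]
    rw [mul_comm, ← mul_assoc, ← Matrix.det_mul, hU2, Matrix.det_one, one_mul,
      Matrix.det_diagonal]
  have htr : N.trace = ∑ i, hH.eigenvalues i := by
    conv_lhs => rw [hspec]
    rw [Matrix.trace_mul_cycle, hU2, Matrix.one_mul, Matrix.trace_diagonal]
  rw [hdet, htr]
  exact prod_one_add_ge _ _ (fun i _ => hN.eigenvalues_nonneg i)

private lemma trace_formula {d m : ℕ} (B : Matrix (Fin d) (Fin m) ℝ) (M : Matrix (Fin d) (Fin d) ℝ) :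
    (Bᵀ * M * B).trace = ∑ j, (fun i => B i j) ⬝ᵥ M *ᵥ (fun i => B i j) := by
  simp only [Matrix.trace, Matrix.diag_apply, Matrix.mul_apply, Matrix.transpose_apply,
    dotProduct, Matrix.mulVec, Finset.sum_mul, Finset.mul_sum]
  refine Finset.sum_congr rfl fun j _ => ?_
  rw [Finset.sum_comm]
  refine Finset.sum_congr rfl fun i _ => ?_
  refine Finset.sum_congr rfl fun k _ => ?_
  ring

private lemma log_ge_half (c : ℝ) (h0 : 0 ≤ c) (h1 : c ≤ 1) : c / 2 ≤ Real.log (1 + c) := by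
  have hpos : 0 < 1 + c := by linarith
  have h2 : 1 - (1 + c)⁻¹ ≤ Real.log (1 + c) := Real.one_sub_inv_le_log_of_pos hpos
  have h3 : (1 + c)⁻¹ * (1 + c) = 1 := inv_mul_cancel₀ hpos.ne'
  nlinarith [h2, h3, inv_nonneg.mpr hpos.le]

private lemma ratio_lemma (D Δ1 : ℝ) (hD0 : 0 ≤ D) (hD1 : D ≤ 1) (hΔ0 : 0 ≤ Δ1)
    (H : ∀ q : ℝ, 0 ≤ q → q ≤ 1 → q * D ^ 2 ≤ ((1 - q) * Δ1 + q * D) ^ 2) :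
    D ≤ 2 * Δ1 := by
  by_contra hc
  push_neg at hc
  have hD : 0 < D := lt_of_le_of_lt (by positivity) hc
  have hpos : 0 < D - Δ1 := by linarith
  set ε := D * (D - 2 * Δ1) / (2 * (D - Δ1) ^ 2) with hεdef
  have hden : 0 < 2 * (D - Δ1) ^ 2 := by positivity
  have hnum : 0 < D * (D - 2 * Δ1) := by nlinarith
  have hε0 : 0 < ε := div_pos hnum hden
  have hε1 : ε ≤ 1 := by
    rw [div_le_one hden]
    nlinarith
  have hεe : ε * (2 * (D - Δ1) ^ 2) = D * (D - 2 * Δ1) :=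
    div_mul_cancel₀ _ hden.ne'
  have h := H (1 - ε) (by linarith) (by linarith)
  nlinarith [h, hεe, hε0, mul_pos hε0 hnum]



/-- The truncated gap estimate `Δ̄(x) = min {1, max_{y ∈ X} (⟨y - x, θ̂⟩ + √β ‖y - x‖_{V⁻¹})}`. -/
noncomputable def truncGap (d : ℕ) (X : Finset (Fin d → ℝ)) (hX : X.Nonempty)
    (V : Matrix (Fin d) (Fin d) ℝ) (θ : Fin d → ℝ) (β : ℝ) (x : Fin d → ℝ) : ℝ :=
  min 1 (X.sup' hX fun y =>
    (y - x) ⬝ᵥ θ + Real.sqrt β * Real.sqrt ((y - x) ⬝ᵥ (V⁻¹ *ᵥ (y - x))))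

/-- The information gain `I(x) = log det (I_m + A_xᵀ V⁻¹ A_x)`. -/
noncomputable def infoGain (d m : ℕ) (A : (Fin d → ℝ) → Matrix (Fin d) (Fin m) ℝ)
    (V : Matrix (Fin d) (Fin d) ℝ) (x : Fin d → ℝ) : ℝ :=
  Real.log (Matrix.det ((1 : Matrix (Fin m) (Fin m) ℝ) + (A x)ᵀ * V⁻¹ * A x))

set_option maxHeartbeats 1600000 in
/-- In a globally observable game with alignment constant `α`, any
distribution `μ` minimizing the information ratio (with the truncated gap estimate `Δ̄`
and information gain `I`) satisfies `Δ̄(μ)³ ≤ 16 α β I(μ)`. -/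
theorem stmt4 (d m : ℕ) (X : Finset (Fin d → ℝ)) (hX : X.Nonempty)
    (A : (Fin d → ℝ) → Matrix (Fin d) (Fin m) ℝ)
    (hA : ∀ x ∈ X, ((1 : Matrix (Fin m) (Fin m) ℝ) - (A x)ᵀ * A x).PosSemidef)
    (V : Matrix (Fin d) (Fin d) ℝ) (hVsymm : V.IsHermitian)
    (hVI : (V - (1 : Matrix (Fin d) (Fin d) ℝ)).PosSemidef)
    (θ : Fin d → ℝ) (β : ℝ) (hβ : 0 < β) (α : ℝ) (hα : 0 < α)
    (halign : ∀ v : Fin d → ℝ, ∀ x ∈ X, ∀ y ∈ X, ∃ z ∈ X,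
      ((x - y) ⬝ᵥ v) ^ 2 ≤ α * (((A z)ᵀ *ᵥ v) ⬝ᵥ ((A z)ᵀ *ᵥ v)))
    (μ : (Fin d → ℝ) → ℝ) (hμ0 : ∀ x ∈ X, 0 ≤ μ x) (hμ1 : ∑ x ∈ X, μ x = 1)
    (hmin : ∀ ν : (Fin d → ℝ) → ℝ, (∀ x ∈ X, 0 ≤ ν x) → (∑ x ∈ X, ν x = 1) →
      (∑ x ∈ X, μ x * truncGap d X hX V θ β x) ^ 2 * (∑ x ∈ X, ν x * infoGain d m A V x) ≤
      (∑ x ∈ X, ν x * truncGap d X hX V θ β x) ^ 2 * (∑ x ∈ X, μ x * infoGain d m A V x)) :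
    (∑ x ∈ X, μ x * truncGap d X hX V θ β x) ^ 3 ≤
      16 * α * β * ∑ x ∈ X, μ x * infoGain d m A V x := by
  classical
  -- positive definiteness facts
  have hV : V.PosDef := by
    have h := Matrix.PosDef.posSemidef_add hVI Matrix.PosDef.one
    rwa [sub_add_cancel] at h
  have hVinv : V⁻¹.PosDef := hV.inv
  have hVVinv : V * V⁻¹ = 1 :=
    Matrix.mul_nonsing_inv V ((Matrix.isUnit_iff_isUnit_det V).mp hV.isUnit)
  have hq : ∀ w : Fin d → ℝ, 0 ≤ w ⬝ᵥ V⁻¹ *ᵥ w := fun w => by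
    simpa using hVinv.posSemidef.dotProduct_mulVec_nonneg w
  have hqpos : ∀ w : Fin d → ℝ, w ≠ 0 → 0 < w ⬝ᵥ V⁻¹ *ᵥ w := fun w hw => by
    simpa using hVinv.dotProduct_mulVec_pos hw
  set Δ := truncGap d X hX V θ β with hΔdef
  set Ig := infoGain d m A V with hIgdef
  -- basic facts about the gap
  have hGself : ∀ x ∈ X, 0 ≤ X.sup' hX (fun y =>
      (y - x) ⬝ᵥ θ + Real.sqrt β * Real.sqrt ((y - x) ⬝ᵥ (V⁻¹ *ᵥ (y - x)))) := by
    intro x hx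
    have h := Finset.le_sup' (fun y =>
      (y - x) ⬝ᵥ θ + Real.sqrt β * Real.sqrt ((y - x) ⬝ᵥ (V⁻¹ *ᵥ (y - x)))) hx
    refine le_trans (le_of_eq ?_) h
    simp
  have hΔ0 : ∀ x ∈ X, 0 ≤ Δ x := fun x hx => le_min zero_le_one (hGself x hx)
  have hΔ1 : ∀ x, Δ x ≤ 1 := fun x => min_le_left _ _
  -- facts about information gain
  have hNpsd : ∀ x, ((A x)ᵀ * V⁻¹ * A x).PosSemidef := fun x => by
    have h := hVinv.posSemidef.conjTranspose_mul_mul_same (A x)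
    rwa [Matrix.conjTranspose_eq_transpose_of_trivial] at h
  have hNtr : ∀ x, 0 ≤ ((A x)ᵀ * V⁻¹ * A x).trace := fun x => by
    rw [trace_formula]
    exact Finset.sum_nonneg fun j _ => hq _
  have hdet1 : ∀ x, 1 + ((A x)ᵀ * V⁻¹ * A x).trace ≤ (1 + (A x)ᵀ * V⁻¹ * A x).det :=
    fun x => det_one_add_trace _ (hNpsd x)
  have hIgeq : ∀ x, Ig x = Real.log ((1 + (A x)ᵀ * V⁻¹ * A x).det) := fun x => rfl
  have hIg0 : ∀ x, 0 ≤ Ig x := fun x =>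
    Real.log_nonneg (by linarith [hdet1 x, hNtr x])
  -- the key global observability estimate
  have key : ∀ x ∈ X, ∀ y ∈ X, ∃ z ∈ X,
      (y - x) ⬝ᵥ (V⁻¹ *ᵥ (y - x)) ≤ 2 * α * Ig z := by
    intro x hx y hy
    obtain ⟨z, hzX, hzin⟩ := halign (V⁻¹ *ᵥ (y - x)) y hy x hx
    refine ⟨z, hzX, ?_⟩
    set w := y - x with hw
    set u := V⁻¹ *ᵥ w with hu
    set s := w ⬝ᵥ u with hs
    set t := ((A z)ᵀ *ᵥ u) ⬝ᵥ ((A z)ᵀ *ᵥ u) with ht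
    have hs0 : 0 ≤ s := hq w
    rcases eq_or_lt_of_le hs0 with hs' | hs'
    · rw [← hs']
      exact mul_nonneg (by linarith) (hIg0 z)
    · have ht0 : 0 ≤ t := Finset.sum_nonneg fun i _ => mul_self_nonneg _
      -- t ≤ trace * s
      have htr' : ((A z)ᵀ * V⁻¹ * A z).trace
          = ∑ j, (fun i => A z i j) ⬝ᵥ V⁻¹ *ᵥ (fun i => A z i j) := trace_formula (A z) V⁻¹
      have htsum : t = ∑ j, ((fun i => A z i j) ⬝ᵥ u) ^ 2 := by
        simp [ht, dotProduct, Matrix.mulVec, Matrix.transpose_apply, sq]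
      have h1 : t ≤ ((A z)ᵀ * V⁻¹ * A z).trace * s := by
        rw [htsum, htr', Finset.sum_mul]
        refine Finset.sum_le_sum fun j _ => ?_
        have := cs_psd V⁻¹ hVinv.posSemidef (fun i => A z i j) w
        rw [hu]
        exact this
      -- t ≤ s
      have hAz : ∀ v : Fin m → ℝ, (A z *ᵥ v) ⬝ᵥ (A z *ᵥ v) ≤ v ⬝ᵥ v := by
        intro v
        have h := (hA z hzX).dotProduct_mulVec_nonneg v
        simp only [star_trivial, Matrix.sub_mulVec, Matrix.one_mulVec,
          dotProduct_sub, ← Matrix.mulVec_mulVec] at h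
        rw [Matrix.dotProduct_mulVec v, Matrix.vecMul_transpose] at h
        linarith
      have hABu : t = (A z *ᵥ ((A z)ᵀ *ᵥ u)) ⬝ᵥ u := by
        rw [ht, Matrix.dotProduct_mulVec, Matrix.vecMul_transpose]
      have hCS : ((A z *ᵥ ((A z)ᵀ *ᵥ u)) ⬝ᵥ u) ^ 2
          ≤ ((A z *ᵥ ((A z)ᵀ *ᵥ u)) ⬝ᵥ (A z *ᵥ ((A z)ᵀ *ᵥ u))) * (u ⬝ᵥ u) := by
        have := cs_psd (1 : Matrix (Fin d) (Fin d) ℝ) Matrix.PosSemidef.one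
          (A z *ᵥ ((A z)ᵀ *ᵥ u)) u
        simpa [Matrix.one_mulVec] using this
      have hus : u ⬝ᵥ u ≤ s := by
        have h := hVI.dotProduct_mulVec_nonneg u
        have hVu : V *ᵥ u = w := by
          rw [hu, Matrix.mulVec_mulVec, hVVinv, Matrix.one_mulVec]
        simp only [star_trivial, Matrix.sub_mulVec, Matrix.one_mulVec,
          dotProduct_sub, hVu] at h
        have huw : u ⬝ᵥ w = s := by rw [hs, dotProduct_comm]
        linarith
      have huu0 : 0 ≤ u ⬝ᵥ u := Finset.sum_nonneg fun i _ => mul_self_nonneg _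
      have ht2 : t ^ 2 ≤ t * s := by
        calc t ^ 2 = ((A z *ᵥ ((A z)ᵀ *ᵥ u)) ⬝ᵥ u) ^ 2 := by rw [← hABu]
          _ ≤ ((A z *ᵥ ((A z)ᵀ *ᵥ u)) ⬝ᵥ (A z *ᵥ ((A z)ᵀ *ᵥ u))) * (u ⬝ᵥ u) := hCS
          _ ≤ (((A z)ᵀ *ᵥ u) ⬝ᵥ ((A z)ᵀ *ᵥ u)) * (u ⬝ᵥ u) :=
              mul_le_mul_of_nonneg_right (hAz _) huu0
          _ = t * (u ⬝ᵥ u) := by rw [ht]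
          _ ≤ t * s := mul_le_mul_of_nonneg_left hus ht0
      have hts : t ≤ s := by nlinarith [ht2, ht0, hs']
      -- information gain lower bound
      have hc1 : t / s ≤ 1 := (div_le_one hs').mpr hts
      have hc0 : 0 ≤ t / s := div_nonneg ht0 hs0
      have hlog : t / s / 2 ≤ Real.log (1 + t / s) := log_ge_half _ hc0 hc1
      have hdet2 : 1 + t / s ≤ (1 + (A z)ᵀ * V⁻¹ * A z).det := by
        have h2 : t / s ≤ ((A z)ᵀ * V⁻¹ * A z).trace := by
          rw [div_le_iff₀ hs']
          exact h1
        linarith [hdet1 z]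
      have hIgz : t / s / 2 ≤ Ig z := by
        refine hlog.trans ?_
        rw [hIgeq]
        exact Real.log_le_log (by linarith) hdet2
      -- combine
      have hzin' : s ^ 2 ≤ α * t := hzin
      have h5 : t ≤ 2 * Ig z * s := by
        have h6 : t / s ≤ 2 * Ig z := by linarith
        rwa [div_le_iff₀ hs'] at h6
      nlinarith [hzin', h5, hs', hα.le]
  -- the greedy action
  obtain ⟨x₁, hx₁X, hx₁max⟩ := X.exists_max_image (fun x => x ⬝ᵥ θ) hX
  obtain ⟨y₁, hy₁X, hGx₁⟩ := Finset.exists_mem_eq_sup' hX (fun y =>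
    (y - x₁) ⬝ᵥ θ + Real.sqrt β * Real.sqrt ((y - x₁) ⬝ᵥ (V⁻¹ *ᵥ (y - x₁))))
  have hΔle : Δ x₁ ≤ Real.sqrt β * Real.sqrt ((y₁ - x₁) ⬝ᵥ (V⁻¹ *ᵥ (y₁ - x₁))) := by
    have h1 : Δ x₁ ≤ (y₁ - x₁) ⬝ᵥ θ
        + Real.sqrt β * Real.sqrt ((y₁ - x₁) ⬝ᵥ (V⁻¹ *ᵥ (y₁ - x₁))) := by
      rw [← hGx₁]
      exact min_le_right _ _
    have h2 : (y₁ - x₁) ⬝ᵥ θ ≤ 0 := by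
      rw [sub_dotProduct]
      linarith [hx₁max y₁ hy₁X]
    linarith
  have hΔsq : Δ x₁ ^ 2 ≤ β * ((y₁ - x₁) ⬝ᵥ (V⁻¹ *ᵥ (y₁ - x₁))) := by
    have h0 := hΔ0 x₁ hx₁X
    have hsn := hq (y₁ - x₁)
    have hsqeq : (Real.sqrt β * Real.sqrt ((y₁ - x₁) ⬝ᵥ (V⁻¹ *ᵥ (y₁ - x₁)))) ^ 2
        = β * ((y₁ - x₁) ⬝ᵥ (V⁻¹ *ᵥ (y₁ - x₁))) := by
      rw [mul_pow, Real.sq_sqrt hβ.le, Real.sq_sqrt hsn]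
    nlinarith [hΔle, h0]
  obtain ⟨z, hzX, hzkey⟩ := key x₁ hx₁X y₁ hy₁X
  have hΔz : Δ x₁ ^ 2 ≤ 2 * α * β * Ig z := by
    have := mul_le_mul_of_nonneg_left hzkey hβ.le
    nlinarith [hΔsq]
  -- sum helpers
  have sum_pt : ∀ a ∈ X, ∀ f : (Fin d → ℝ) → ℝ,
      ∑ x ∈ X, (if x = a then (1:ℝ) else 0) * f x = f a := by
    intro a ha f
    simp [ite_mul, ha]
  have sum_two : ∀ (p : ℝ), ∀ a ∈ X, ∀ b ∈ X, ∀ f : (Fin d → ℝ) → ℝ,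
      ∑ x ∈ X, ((1 - p) * (if x = a then (1:ℝ) else 0) + p * (if x = b then 1 else 0)) * f x
        = (1 - p) * f a + p * f b := by
    intro p a ha b hb f
    simp only [add_mul, Finset.sum_add_distrib, mul_assoc]
    rw [← Finset.mul_sum, ← Finset.mul_sum, sum_pt a ha f, sum_pt b hb f]
  have sum_mix : ∀ (q' : ℝ), ∀ a ∈ X, ∀ f : (Fin d → ℝ) → ℝ,
      ∑ x ∈ X, ((1 - q') * (if x = a then (1:ℝ) else 0) + q' * μ x) * f x
        = (1 - q') * f a + q' * ∑ x ∈ X, μ x * f x := by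
    intro q' a ha f
    simp only [add_mul, Finset.sum_add_distrib, mul_assoc]
    rw [← Finset.mul_sum, ← Finset.mul_sum, sum_pt a ha f]
  set D := ∑ x ∈ X, μ x * Δ x with hDdef
  set K := ∑ x ∈ X, μ x * Ig x with hKdef
  have hD0 : 0 ≤ D := Finset.sum_nonneg fun x hx => mul_nonneg (hμ0 x hx) (hΔ0 x hx)
  have hD1 : D ≤ 1 := by
    have h := Finset.sum_le_sum fun x hx =>
      mul_le_mul_of_nonneg_left (hΔ1 x) (hμ0 x hx)
    calc D ≤ ∑ x ∈ X, μ x * 1 := h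
      _ = 1 := by simpa using hμ1
  have hK0 : 0 ≤ K := Finset.sum_nonneg fun x hx => mul_nonneg (hμ0 x hx) (hIg0 x)
  rcases eq_or_lt_of_le hK0 with hKz | hKpos
  · -- degenerate case: K = 0
    have hDz : D = 0 := by
      by_contra hDne
      have hDpos : 0 < D := lt_of_le_of_ne hD0 (Ne.symm hDne)
      have hIgz : ∀ x ∈ X, Ig x = 0 := by
        intro x hx
        have hm := hmin (fun y => if y = x then 1 else 0)
          (fun y _ => by by_cases h : y = x <;> norm_num [h]) (by simp [hx])
        rw [sum_pt x hx Ig, sum_pt x hx Δ, ← hKz] at hm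
        have hD2 : 0 < D ^ 2 := by positivity
        have hle : Ig x ≤ 0 := by nlinarith [hm, hD2]
        exact le_antisymm hle (hIg0 x)
      have hΔzz : ∀ x ∈ X, Δ x = 0 := by
        intro x hx
        obtain ⟨y₂, hy₂X, hGx⟩ := Finset.exists_mem_eq_sup' hX (fun y =>
          (y - x) ⬝ᵥ θ + Real.sqrt β * Real.sqrt ((y - x) ⬝ᵥ (V⁻¹ *ᵥ (y - x))))
        obtain ⟨z₂, hz₂X, hz₂⟩ := key x hx y₂ hy₂X
        rw [hIgz z₂ hz₂X] at hz₂
        have hs0 := hq (y₂ - x)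
        have hseq : (y₂ - x) ⬝ᵥ (V⁻¹ *ᵥ (y₂ - x)) = 0 := le_antisymm (by linarith) hs0
        have hwz : y₂ - x = 0 := by
          by_contra hne
          exact absurd hseq (ne_of_gt (hqpos _ hne))
        have hΔx : Δ x = min 1 ((y₂ - x) ⬝ᵥ θ
            + Real.sqrt β * Real.sqrt ((y₂ - x) ⬝ᵥ (V⁻¹ *ᵥ (y₂ - x)))) := by
          rw [show Δ x = min 1 (X.sup' hX fun y =>
            (y - x) ⬝ᵥ θ + Real.sqrt β * Real.sqrt ((y - x) ⬝ᵥ (V⁻¹ *ᵥ (y - x)))) from rfl,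
            hGx]
        rw [hΔx, hwz]
        simp
      have : D = 0 := Finset.sum_eq_zero fun x hx => by rw [hΔzz x hx, mul_zero]
      exact hDne this
    rw [hDz, ← hKz]
    norm_num
  · -- main case: K > 0
    have hH : ∀ q' : ℝ, 0 ≤ q' → q' ≤ 1 → q' * D ^ 2 ≤ ((1 - q') * Δ x₁ + q' * D) ^ 2 := by
      intro q' hq0 hq1
      have hm := hmin (fun x => (1 - q') * (if x = x₁ then 1 else 0) + q' * μ x)
        (fun x hx => add_nonneg (mul_nonneg (by linarith) (by split <;> norm_num))
          (mul_nonneg hq0 (hμ0 x hx)))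
        (by
          rw [Finset.sum_add_distrib, ← Finset.mul_sum, ← Finset.mul_sum, hμ1]
          simp [Finset.sum_ite_eq', hx₁X])
      rw [sum_mix q' x₁ hx₁X Ig, sum_mix q' x₁ hx₁X Δ] at hm
      have h1 : q' * D ^ 2 * K ≤ D ^ 2 * ((1 - q') * Ig x₁ + q' * K) := by
        nlinarith [mul_nonneg (mul_nonneg (sq_nonneg D)
          (by linarith : (0:ℝ) ≤ 1 - q')) (hIg0 x₁)]
      have h2 := h1.trans hm
      exact le_of_mul_le_mul_right (by nlinarith [h2]) hKpos
    have hL : D ≤ 2 * Δ x₁ := ratio_lemma D (Δ x₁) hD0 hD1 (hΔ0 x₁ hx₁X) hH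
    rcases eq_or_lt_of_le (hΔ0 x₁ hx₁X) with hΔ1z | hΔ1pos
    · have hDz : D = 0 := le_antisymm (by rw [← hΔ1z] at hL; linarith) hD0
      rw [hDz]
      have h16 : 0 ≤ 16 * α * β * K :=
        mul_nonneg (by positivity) hKpos.le
      simpa using h16
    · -- Δ x₁ > 0
      have hm := hmin (fun x => (1 - Δ x₁) * (if x = x₁ then 1 else 0)
          + Δ x₁ * (if x = z then 1 else 0))
        (fun x hx => add_nonneg
          (mul_nonneg (by linarith [hΔ1 x₁]) (by split <;> norm_num))
          (mul_nonneg hΔ1pos.le (by split <;> norm_num)))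
        (by
          rw [Finset.sum_add_distrib, ← Finset.mul_sum, ← Finset.mul_sum]
          simp [Finset.sum_ite_eq', hx₁X, hzX])
      rw [sum_two (Δ x₁) x₁ hx₁X z hzX Ig, sum_two (Δ x₁) x₁ hx₁X z hzX Δ] at hm
      have hb1 : (1 - Δ x₁) * Δ x₁ + Δ x₁ * Δ z ≤ 2 * Δ x₁ := by
        nlinarith [hΔ1 z, hΔ0 z hzX, hΔ1 x₁, hΔ0 x₁ hx₁X]
      have hb0 : 0 ≤ (1 - Δ x₁) * Δ x₁ + Δ x₁ * Δ z := by
        have := hΔ0 z hzX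
        nlinarith [hΔ1 x₁, hΔ0 x₁ hx₁X]
      have hRHS : ((1 - Δ x₁) * Δ x₁ + Δ x₁ * Δ z) ^ 2 * K ≤ 4 * Δ x₁ ^ 2 * K := by
        have h := mul_le_mul_of_nonneg_right (pow_le_pow_left₀ hb0 hb1 2) hKpos.le
        calc ((1 - Δ x₁) * Δ x₁ + Δ x₁ * Δ z) ^ 2 * K ≤ (2 * Δ x₁) ^ 2 * K := h
          _ = 4 * Δ x₁ ^ 2 * K := by ring
      have hLHS : D ^ 2 * (Δ x₁ * Ig z)
          ≤ D ^ 2 * ((1 - Δ x₁) * Ig x₁ + Δ x₁ * Ig z) := by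
        nlinarith [mul_nonneg (mul_nonneg (sq_nonneg D)
          (by linarith [hΔ1 x₁] : (0:ℝ) ≤ 1 - Δ x₁)) (hIg0 x₁)]
      have hmain : D ^ 2 * (Δ x₁ * Ig z) ≤ 4 * Δ x₁ ^ 2 * K := le_trans hLHS (hm.trans hRHS)
      -- conclude
      have h3 : D ^ 2 * Δ x₁ * Δ x₁ ^ 2 ≤ 8 * α * β * K * Δ x₁ ^ 2 := by
        have e1 : D ^ 2 * Δ x₁ * Δ x₁ ^ 2 ≤ D ^ 2 * Δ x₁ * (2 * α * β * Ig z) :=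
          mul_le_mul_of_nonneg_left hΔz (mul_nonneg (sq_nonneg D) hΔ1pos.le)
        have e2 : 2 * α * β * (D ^ 2 * (Δ x₁ * Ig z)) ≤ 2 * α * β * (4 * Δ x₁ ^ 2 * K) :=
          mul_le_mul_of_nonneg_left hmain (by positivity)
        nlinarith [e1, e2]
      have hsqpos : 0 < Δ x₁ ^ 2 := by positivity
      have h8 : D ^ 2 * Δ x₁ ≤ 8 * α * β * K :=
        le_of_mul_le_mul_right (by nlinarith [h3]) hsqpos
      calc D ^ 3 = D * D ^ 2 := by ring
        _ ≤ (2 * Δ x₁) * D ^ 2 := mul_le_mul_of_nonneg_right hL (sq_nonneg D)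
        _ = 2 * (D ^ 2 * Δ x₁) := by ring
        _ ≤ 2 * (8 * α * β * K) := by linarith [h8]
        _ = 16 * α * β * K := by ring
end

section
/- Let X be a finite nonempty set and let Δ : X → ℝ and I : X → ℝ be functions with Δ(x) ≥ 0 and I(x) ≥ 0 for all x ∈ X. For a probability distribution μ on X write Δ(μ) = Σ_{x∈X} μ(x)·Δ(x) and I(μ) = Σ_{x∈X} μ(x)·I(x). Suppose μ is a probability distribution on X with I(μ) > 0 such that Δ(μ)²·I(ν) ≤ Δ(ν)²·I(μ) for every probability distribution ν on X (i.e. μ minimizes the information ratio Δ(·)²/I(·)). Then Δ(μ) ≤ 2·Δ(x) for every x ∈ X; that is, Δ(μ) ≤ 2·min_{x∈X} Δ(x). -/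
open Finset

/-- **Lemma 4 of the paper.** If `Δ, I : X → ℝ` are nonnegative functions on a
finite nonempty set and `μ` is a probability distribution with `I(μ) > 0` that minimizes the
information ratio `Δ(·)²/I(·)`, then `Δ(μ) ≤ 2 Δ(x)` for every `x ∈ X`. -/
theorem stmt5 {X : Type*} [Fintype X] [Nonempty X] (Δ I : X → ℝ)
    (hΔ : ∀ x, 0 ≤ Δ x) (hI : ∀ x, 0 ≤ I x)
    (μ : X → ℝ) (hμ0 : ∀ x, 0 ≤ μ x) (hμ1 : ∑ x, μ x = 1)
    (hIμ : 0 < ∑ x, μ x * I x)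
    (hmin : ∀ ν : X → ℝ, (∀ x, 0 ≤ ν x) → (∑ x, ν x = 1) →
      (∑ x, μ x * Δ x) ^ 2 * (∑ x, ν x * I x) ≤
        (∑ x, ν x * Δ x) ^ 2 * (∑ x, μ x * I x)) :
    ∀ x : X, (∑ y, μ y * Δ y) ≤ 2 * Δ x := by
  classical
  intro x
  by_contra hcon
  push_neg at hcon
  set a : ℝ := ∑ y, μ y * Δ y with ha
  set b : ℝ := Δ x with hb
  have hb0 : 0 ≤ b := hΔ x
  have hab : 2 * b < a := hcon
  have ha0 : 0 < a := by linarith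
  have hd : 0 < (a - b) ^ 2 := pow_pos (by linarith) 2
  set t : ℝ := a * (a - 2 * b) / (2 * (a - b) ^ 2) with ht
  have ht0 : 0 < t := by
    apply div_pos (by nlinarith) (by nlinarith)
  have ht1 : t < 1 := by
    rw [div_lt_one (by nlinarith)]
    nlinarith
  -- the perturbed distribution
  set ν : X → ℝ := fun y => (1 - t) * μ y + t * (if y = x then 1 else 0) with hν
  have hν0 : ∀ y, 0 ≤ ν y := by
    intro y
    have := hμ0 y
    simp only [hν]
    split <;> nlinarith
  have hν1 : ∑ y, ν y = 1 := by
    simp only [hν]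
    rw [Finset.sum_add_distrib, ← Finset.mul_sum, ← Finset.mul_sum, hμ1]
    rw [Finset.sum_ite_eq' Finset.univ x (fun _ => (1:ℝ))]
    simp
  have hsum : ∀ f : X → ℝ, ∑ y, ν y * f y = (1 - t) * (∑ y, μ y * f y) + t * f x := by
    intro f
    have hterm : ∀ y, ν y * f y = (1 - t) * (μ y * f y) + t * (if y = x then f y else 0) := by
      intro y; simp only [hν]; split <;> ring
    simp only [hterm]
    rw [Finset.sum_add_distrib, ← Finset.mul_sum, ← Finset.mul_sum,
      Finset.sum_ite_eq' Finset.univ x f]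
    simp
  have key := hmin ν hν0 hν1
  rw [hsum Δ, hsum I] at key
  set B : ℝ := ∑ y, μ y * I y with hB
  have hIx : 0 ≤ I x := hI x
  -- A² * ((1-t)B + t I x) ≤ ((1-t)a + t b)² * B
  have h1 : a ^ 2 * ((1 - t) * B) ≤ ((1 - t) * a + t * b) ^ 2 * B := by
    nlinarith [sq_nonneg a, mul_nonneg (le_of_lt ht0) hIx, sq_nonneg a, hIμ]
  have h2 : a ^ 2 * (1 - t) ≤ ((1 - t) * a + t * b) ^ 2 := by
    have hB0 : 0 < B := hIμ
    nlinarith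
  -- contradiction: plug in t
  have hexp : ((1 - t) * a + t * b) ^ 2 - a ^ 2 * (1 - t)
      = t * (2 * a * b - a ^ 2) + t ^ 2 * (a - b) ^ 2 := by ring
  have htval : t * (2 * (a - b) ^ 2) = a * (a - 2 * b) := by
    rw [ht, div_mul_cancel₀ _ (mul_pos two_pos hd).ne']
  nlinarith [sq_nonneg (a * (a - 2*b)), mul_pos ht0 hd]
end

section
/- Let X ⊂ ℝ^d be a finite nonempty set, V ∈ ℝ^{d×d} symmetric positive definite, θ̂ ∈ ℝ^d, and β > 0. Let C = {θ ∈ ℝ^d : (θ−θ̂)ᵀ V (θ−θ̂) ≤ β} and let P(C) = {x ∈ X : there exists θ ∈ C with ⟨x,θ⟩ = max_{y∈X} ⟨y,θ⟩}. Then for every x ∈ X, max_{y∈X} (⟨y−x, θ̂⟩ + √β·‖y−x‖_{V^{-1}}) = max_{y∈P(C)} (⟨y−x, θ̂⟩ + √β·‖y−x‖_{V^{-1}}); that is, the maximum in the gap estimate is attained at a plausible maximizer. -/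
open Matrix Finset Classical

lemma dot_cs {d : ℕ} (a b : Fin d → ℝ) :
    a ⬝ᵥ b ≤ Real.sqrt (a ⬝ᵥ a) * Real.sqrt (b ⬝ᵥ b) := by
  have h := real_inner_le_norm ((WithLp.equiv 2 (Fin d → ℝ)).symm a)
    ((WithLp.equiv 2 (Fin d → ℝ)).symm b)
  simpa [PiLp.inner_apply, EuclideanSpace.norm_eq, dotProduct, Real.sqrt_eq_rpow,
    mul_comm, sq] using h

open scoped MatrixOrder in
lemma psd_cs {d : ℕ} {M : Matrix (Fin d) (Fin d) ℝ} (hM : M.PosSemidef) (u v : Fin d → ℝ) :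
    u ⬝ᵥ (M *ᵥ v) ≤ Real.sqrt (u ⬝ᵥ (M *ᵥ u)) * Real.sqrt (v ⬝ᵥ (M *ᵥ v)) := by
  have hS : CFC.sqrt M * CFC.sqrt M = M := CFC.sqrt_mul_sqrt_self M hM.nonneg
  have hsym : (CFC.sqrt M).IsHermitian := (CFC.sqrt_nonneg M).posSemidef.1
  have hmv : ∀ w : Fin d → ℝ, CFC.sqrt M *ᵥ w = w ᵥ* CFC.sqrt M := by
    intro w
    rw [← mulVec_transpose, ← conjTranspose_eq_transpose_of_trivial, hsym.eq]
  have key : ∀ w z : Fin d → ℝ, (CFC.sqrt M *ᵥ w) ⬝ᵥ (CFC.sqrt M *ᵥ z) = w ⬝ᵥ (M *ᵥ z) := by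
    intro w z
    rw [hmv, ← dotProduct_mulVec, mulVec_mulVec, hS]
  rw [← key, ← key, ← key]
  exact dot_cs _ _

lemma psd_dot_nonneg {d : ℕ} {M : Matrix (Fin d) (Fin d) ℝ} (hM : M.PosSemidef)
    (u : Fin d → ℝ) : 0 ≤ u ⬝ᵥ (M *ᵥ u) := by
  have := hM.dotProduct_mulVec_nonneg u
  simpa using this

/-- **gap maximisers lemma.** The maximum in the gap estimate
`Δ(x) = max_{y ∈ X} (⟨y - x, θ̂⟩ + √β ‖y - x‖_{V⁻¹})` is attained on the set of plausible
maximizers `P(C) = {a ∈ X : ∃ θ ∈ C, ⟨a, θ⟩ = max_{y ∈ X} ⟨y, θ⟩}`, where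
`C = {θ : (θ - θ̂)ᵀ V (θ - θ̂) ≤ β}` is the confidence ellipsoid. -/
theorem stmt6 (d : ℕ) (X : Finset (Fin d → ℝ)) (hX : X.Nonempty)
    (V : Matrix (Fin d) (Fin d) ℝ) (hV : V.PosDef)
    (θh : Fin d → ℝ) (β : ℝ) (hβ : 0 < β)
    (hP : (X.filter fun a => ∃ θ : Fin d → ℝ,
        (θ - θh) ⬝ᵥ (V *ᵥ (θ - θh)) ≤ β ∧ ∀ y ∈ X, y ⬝ᵥ θ ≤ a ⬝ᵥ θ).Nonempty)
    (x : Fin d → ℝ) (hx : x ∈ X) :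
    (X.sup' hX fun y =>
        (y - x) ⬝ᵥ θh + Real.sqrt β * Real.sqrt ((y - x) ⬝ᵥ (V⁻¹ *ᵥ (y - x)))) =
    ((X.filter fun a => ∃ θ : Fin d → ℝ,
        (θ - θh) ⬝ᵥ (V *ᵥ (θ - θh)) ≤ β ∧ ∀ y ∈ X, y ⬝ᵥ θ ≤ a ⬝ᵥ θ).sup' hP fun y =>
        (y - x) ⬝ᵥ θh + Real.sqrt β * Real.sqrt ((y - x) ⬝ᵥ (V⁻¹ *ᵥ (y - x)))) := by
  set f : (Fin d → ℝ) → ℝ := fun y =>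
    (y - x) ⬝ᵥ θh + Real.sqrt β * Real.sqrt ((y - x) ⬝ᵥ (V⁻¹ *ᵥ (y - x))) with hf
  have hVinv : (V⁻¹).PosDef := hV.inv
  have hPSD := hVinv.posSemidef
  refine le_antisymm ?_ (Finset.sup'_le _ _ fun b hb => Finset.le_sup' f (mem_filter.mp hb).1)
  obtain ⟨z, hzX, hz⟩ := Finset.exists_mem_eq_sup' hX f
  rw [hz]
  -- z maximizes f over X; show z is a plausible maximizer
  set w : Fin d → ℝ := z - x with hw
  set N : ℝ := Real.sqrt (w ⬝ᵥ (V⁻¹ *ᵥ w)) with hN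
  have hN0 : 0 ≤ N := Real.sqrt_nonneg _
  have hwN : w ⬝ᵥ (V⁻¹ *ᵥ w) = N ^ 2 := (Real.sq_sqrt (psd_dot_nonneg hPSD w)).symm
  set c : ℝ := if N = 0 then 0 else Real.sqrt β / N with hc
  have hc0 : 0 ≤ c := by
    rw [hc]; split
    · exact le_rfl
    · exact div_nonneg (Real.sqrt_nonneg _) hN0
  have hcN : c * N = if N = 0 then 0 else Real.sqrt β := by
    rw [hc]; split
    · exact zero_mul N
    · exact div_mul_cancel₀ _ (by assumption)
  have hcNle : c * N ≤ Real.sqrt β := by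
    rw [hcN]; split
    · exact Real.sqrt_nonneg _
    · exact le_rfl
  have hfin : Real.sqrt β * N = (c * N) * N := by
    rw [hcN]; split
    · rename_i h; rw [h]; ring
    · rfl
  set θ : Fin d → ℝ := θh + c • (V⁻¹ *ᵥ w) with hθ
  have hθsub : θ - θh = c • (V⁻¹ *ᵥ w) := by rw [hθ]; abel
  have hdet : IsUnit V.det := isUnit_iff_ne_zero.mpr hV.det_pos.ne'
  have hVu0 : V *ᵥ (V⁻¹ *ᵥ w) = w := by
    rw [mulVec_mulVec, mul_nonsing_inv _ hdet, one_mulVec]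
  have hC : (θ - θh) ⬝ᵥ (V *ᵥ (θ - θh)) ≤ β := by
    rw [hθsub, mulVec_smul, hVu0, smul_dotProduct, dotProduct_smul, smul_eq_mul, smul_eq_mul,
      dotProduct_comm, hwN]
    have h2 : c * (c * N ^ 2) = (c * N) ^ 2 := by ring
    rw [h2, hcN]
    split
    · simpa using hβ.le
    · rw [Real.sq_sqrt hβ.le]
  have expand : ∀ v : Fin d → ℝ, v ⬝ᵥ θ = v ⬝ᵥ θh + c * (v ⬝ᵥ (V⁻¹ *ᵥ w)) := by
    intro v
    rw [hθ, dotProduct_add, dotProduct_smul, smul_eq_mul]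
  have hmax : ∀ y ∈ X, y ⬝ᵥ θ ≤ z ⬝ᵥ θ := by
    intro y hy
    have hfy : f y ≤ f z := hz ▸ Finset.le_sup' f hy
    have key : (y - x) ⬝ᵥ θ ≤ w ⬝ᵥ θ := by
      have hCS : (y - x) ⬝ᵥ (V⁻¹ *ᵥ w) ≤
          Real.sqrt ((y - x) ⬝ᵥ (V⁻¹ *ᵥ (y - x))) * N := psd_cs hPSD (y - x) w
      have hNu0 : 0 ≤ Real.sqrt ((y - x) ⬝ᵥ (V⁻¹ *ᵥ (y - x))) := Real.sqrt_nonneg _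
      calc (y - x) ⬝ᵥ θ
          = (y - x) ⬝ᵥ θh + c * ((y - x) ⬝ᵥ (V⁻¹ *ᵥ w)) := expand _
        _ ≤ (y - x) ⬝ᵥ θh + c * (Real.sqrt ((y - x) ⬝ᵥ (V⁻¹ *ᵥ (y - x))) * N) := by
            have := mul_le_mul_of_nonneg_left hCS hc0
            linarith
        _ = (y - x) ⬝ᵥ θh + (c * N) * Real.sqrt ((y - x) ⬝ᵥ (V⁻¹ *ᵥ (y - x))) := by ring
        _ ≤ (y - x) ⬝ᵥ θh + Real.sqrt β * Real.sqrt ((y - x) ⬝ᵥ (V⁻¹ *ᵥ (y - x))) := by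
            have := mul_le_mul_of_nonneg_right hcNle hNu0
            linarith
        _ ≤ w ⬝ᵥ θh + Real.sqrt β * N := hfy
        _ = w ⬝ᵥ θh + (c * N) * N := by rw [hfin]
        _ = w ⬝ᵥ θh + c * (w ⬝ᵥ (V⁻¹ *ᵥ w)) := by rw [hwN]; ring
        _ = w ⬝ᵥ θ := (expand w).symm
    have h1 : (y - x) ⬝ᵥ θ = y ⬝ᵥ θ - x ⬝ᵥ θ := sub_dotProduct ..
    have h2 : w ⬝ᵥ θ = z ⬝ᵥ θ - x ⬝ᵥ θ := by rw [hw]; exact sub_dotProduct ..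
    linarith
  exact Finset.le_sup' f (mem_filter.mpr ⟨hzX, θ, hC, hmax⟩)
end

section
/- Let X ⊂ ℝ^d be a finite nonempty set, V ∈ ℝ^{d×d} symmetric positive definite, θ̂ ∈ ℝ^d, and β > 0. Let C = {θ ∈ ℝ^d : (θ−θ̂)ᵀ V (θ−θ̂) ≤ β} and P(C) = {x ∈ X : there exists θ ∈ C with ⟨x,θ⟩ = max_{y∈X} ⟨y,θ⟩}. Then for every x ∈ P(C), the gap estimate satisfies max_{y∈X} (⟨y−x, θ̂⟩ + √β·‖y−x‖_{V^{-1}}) ≤ 2·√β·max_{y∈P(C)} ‖y−x‖_{V^{-1}}. -/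
open Matrix Finset Classical

lemma symm_psd {d : ℕ} (A : Matrix (Fin d) (Fin d) ℝ) (hA : A.IsHermitian) (u v : Fin d → ℝ) :
    u ⬝ᵥ (A *ᵥ v) = v ⬝ᵥ (A *ᵥ u) := by
  rw [dotProduct_mulVec, dotProduct_comm, ← mulVec_transpose]
  congr 1
  have := hA.eq
  rw [conjTranspose_eq_transpose_of_trivial] at this
  rw [this]

lemma cs_psd_s7 {d : ℕ} (A : Matrix (Fin d) (Fin d) ℝ) (hA : A.PosSemidef) (a b : Fin d → ℝ) :
    a ⬝ᵥ (A *ᵥ b) ≤ Real.sqrt (a ⬝ᵥ (A *ᵥ a)) * Real.sqrt (b ⬝ᵥ (A *ᵥ b)) := by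
  have hpos : ∀ u : Fin d → ℝ, 0 ≤ u ⬝ᵥ (A *ᵥ u) := fun u => by simpa using hA.dotProduct_mulVec_nonneg u
  have key : ∀ t : ℝ, 0 ≤ (b ⬝ᵥ (A *ᵥ b)) * (t * t) + (2 * (a ⬝ᵥ (A *ᵥ b))) * t
      + a ⬝ᵥ (A *ᵥ a) := by
    intro t
    have := hpos (a + t • b)
    have expand : (a + t • b) ⬝ᵥ (A *ᵥ (a + t • b)) =
        (b ⬝ᵥ (A *ᵥ b)) * (t * t) + (2 * (a ⬝ᵥ (A *ᵥ b))) * t + a ⬝ᵥ (A *ᵥ a) := by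
      rw [mulVec_add, mulVec_smul, dotProduct_add, add_dotProduct, add_dotProduct,
        smul_dotProduct, dotProduct_smul, smul_dotProduct, dotProduct_smul,
        symm_psd A hA.1 b a]
      simp [smul_eq_mul]; ring
    linarith [expand ▸ this]
  have hd := discrim_le_zero key
  rw [discrim] at hd
  have h2 : (a ⬝ᵥ (A *ᵥ b)) ^ 2 ≤ (a ⬝ᵥ (A *ᵥ a)) * (b ⬝ᵥ (A *ᵥ b)) := by nlinarith
  calc a ⬝ᵥ (A *ᵥ b) ≤ |a ⬝ᵥ (A *ᵥ b)| := le_abs_self _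
    _ = Real.sqrt ((a ⬝ᵥ (A *ᵥ b)) ^ 2) := (Real.sqrt_sq_eq_abs _).symm
    _ ≤ Real.sqrt ((a ⬝ᵥ (A *ᵥ a)) * (b ⬝ᵥ (A *ᵥ b))) := Real.sqrt_le_sqrt h2
    _ = _ := Real.sqrt_mul (hpos a) _

/-- For every plausible maximizer `x ∈ P(C)` (with
`C = {θ : (θ - θ̂)ᵀ V (θ - θ̂) ≤ β}` the confidence ellipsoid), the gap estimate satisfies
`max_{y ∈ X} (⟨y - x, θ̂⟩ + √β ‖y - x‖_{V⁻¹}) ≤ 2 √β max_{y ∈ P(C)} ‖y - x‖_{V⁻¹}`. -/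
theorem stmt7 (d : ℕ) (X : Finset (Fin d → ℝ)) (hX : X.Nonempty)
    (V : Matrix (Fin d) (Fin d) ℝ) (hV : V.PosDef)
    (θh : Fin d → ℝ) (β : ℝ) (hβ : 0 < β)
    (hP : (X.filter fun a => ∃ θ : Fin d → ℝ,
        (θ - θh) ⬝ᵥ (V *ᵥ (θ - θh)) ≤ β ∧ ∀ y ∈ X, y ⬝ᵥ θ ≤ a ⬝ᵥ θ).Nonempty)
    (x : Fin d → ℝ)
    (hx : x ∈ X.filter fun a => ∃ θ : Fin d → ℝ,
        (θ - θh) ⬝ᵥ (V *ᵥ (θ - θh)) ≤ β ∧ ∀ y ∈ X, y ⬝ᵥ θ ≤ a ⬝ᵥ θ) :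
    (X.sup' hX fun y =>
        (y - x) ⬝ᵥ θh + Real.sqrt β * Real.sqrt ((y - x) ⬝ᵥ (V⁻¹ *ᵥ (y - x)))) ≤
      2 * Real.sqrt β *
        ((X.filter fun a => ∃ θ : Fin d → ℝ,
            (θ - θh) ⬝ᵥ (V *ᵥ (θ - θh)) ≤ β ∧ ∀ y ∈ X, y ⬝ᵥ θ ≤ a ⬝ᵥ θ).sup' hP fun y =>
          Real.sqrt ((y - x) ⬝ᵥ (V⁻¹ *ᵥ (y - x)))) := by
  classical
  set P := X.filter fun a => ∃ θ : Fin d → ℝ,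
      (θ - θh) ⬝ᵥ (V *ᵥ (θ - θh)) ≤ β ∧ ∀ y ∈ X, y ⬝ᵥ θ ≤ a ⬝ᵥ θ with hPdef
  set f : (Fin d → ℝ) → ℝ := fun y =>
      (y - x) ⬝ᵥ θh + Real.sqrt β * Real.sqrt ((y - x) ⬝ᵥ (V⁻¹ *ᵥ (y - x))) with hf
  have hVi : (V⁻¹).PosDef := hV.inv
  have hVinv : V * V⁻¹ = 1 := mul_nonsing_inv V (isUnit_iff_ne_zero.mpr hV.det_pos.ne')
  have hpos : ∀ u : Fin d → ℝ, 0 ≤ u ⬝ᵥ (V⁻¹ *ᵥ u) := fun u => by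
    simpa using hVi.posSemidef.dotProduct_mulVec_nonneg u
  have hsβ : 0 < Real.sqrt β := Real.sqrt_pos.mpr hβ
  -- x in P and x in X
  have hxX : x ∈ X := (Finset.mem_filter.mp hx).1
  obtain ⟨θx, hθxC, hθxmax⟩ := (Finset.mem_filter.mp hx).2
  -- the sup' is attained
  obtain ⟨y, hyX, hsup⟩ := X.exists_mem_eq_sup' hX f
  rw [hsup]
  set w : Fin d → ℝ := y - x with hw
  set n : ℝ := Real.sqrt (w ⬝ᵥ (V⁻¹ *ᵥ w)) with hn
  have hn0 : 0 ≤ n := Real.sqrt_nonneg _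
  -- RHS sup' is nonneg (x ∈ P gives value 0)
  have hsupnn : 0 ≤ P.sup' hP fun y => Real.sqrt ((y - x) ⬝ᵥ (V⁻¹ *ᵥ (y - x))) := by
    have := Finset.le_sup' (fun y => Real.sqrt ((y - x) ⬝ᵥ (V⁻¹ *ᵥ (y - x)))) hx
    exact le_trans (Real.sqrt_nonneg _) this
  rcases eq_or_lt_of_le hn0 with hnz | hnpos
  · -- n = 0 ⇒ w = 0 ⇒ f y = 0
    have hwz : w = 0 := by
      by_contra hc
      have := hVi.dotProduct_mulVec_pos (x := w) (by simpa using hc)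
      have : (0:ℝ) < w ⬝ᵥ (V⁻¹ *ᵥ w) := by simpa using this
      have := Real.sqrt_pos.mpr this
      rw [← hn] at this; linarith
    have hyx : y = x := by rwa [hw, sub_eq_zero] at hwz
    have : f y = 0 := by simp [hf, hyx]
    rw [this]
    positivity
  -- main case: n > 0
  set c : ℝ := Real.sqrt β / n with hc
  have hcpos : 0 < c := div_pos hsβ hnpos
  set θy : Fin d → ℝ := θh + c • (V⁻¹ *ᵥ w) with hθy
  have hVVi : ∀ u : Fin d → ℝ, V *ᵥ (V⁻¹ *ᵥ u) = u := fun u => by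
    rw [mulVec_mulVec, hVinv, one_mulVec]
  -- θy ∈ C
  have hθyC : (θy - θh) ⬝ᵥ (V *ᵥ (θy - θh)) ≤ β := by
    have h1 : θy - θh = c • (V⁻¹ *ᵥ w) := by simp [hθy]
    rw [h1, mulVec_smul, dotProduct_smul, smul_dotProduct, hVVi]
    have h2 : (V⁻¹ *ᵥ w) ⬝ᵥ w = w ⬝ᵥ (V⁻¹ *ᵥ w) := dotProduct_comm _ _
    rw [smul_eq_mul, smul_eq_mul, h2]
    have hn2 : w ⬝ᵥ (V⁻¹ *ᵥ w) = n ^ 2 := by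
      rw [hn, Real.sq_sqrt (hpos w)]
    rw [hn2, hc]
    have e : Real.sqrt β / n * (Real.sqrt β / n * n ^ 2) = Real.sqrt β * Real.sqrt β := by
      field_simp
    rw [e, Real.mul_self_sqrt hβ.le]
  -- y maximizes ⟨·, θy⟩ over X
  have hymax : ∀ z ∈ X, z ⬝ᵥ θy ≤ y ⬝ᵥ θy := by
    intro z hz
    have hfz : f z ≤ f y := hsup ▸ Finset.le_sup' f hz
    have hz1 : (z - x) ⬝ᵥ θy = (z - x) ⬝ᵥ θh + c * ((z - x) ⬝ᵥ (V⁻¹ *ᵥ w)) := by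
      rw [hθy, dotProduct_add, dotProduct_smul, smul_eq_mul]
    have hy1 : (y - x) ⬝ᵥ θy = (y - x) ⬝ᵥ θh + c * ((y - x) ⬝ᵥ (V⁻¹ *ᵥ w)) := by
      rw [hθy, dotProduct_add, dotProduct_smul, smul_eq_mul]
    have hcs : (z - x) ⬝ᵥ (V⁻¹ *ᵥ w) ≤
        Real.sqrt ((z - x) ⬝ᵥ (V⁻¹ *ᵥ (z - x))) * n := by
      rw [hn]; exact cs_psd_s7 V⁻¹ hVi.posSemidef (z - x) w
    have hwy : (y - x) ⬝ᵥ (V⁻¹ *ᵥ w) = n ^ 2 := by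
      rw [← hw, hn, Real.sq_sqrt (hpos w)]
    have h3 : (z - x) ⬝ᵥ θy ≤ f z := by
      rw [hz1, hf]
      have : c * ((z - x) ⬝ᵥ (V⁻¹ *ᵥ w)) ≤
          c * (Real.sqrt ((z - x) ⬝ᵥ (V⁻¹ *ᵥ (z - x))) * n) :=
        mul_le_mul_of_nonneg_left hcs hcpos.le
      have hcn : c * n = Real.sqrt β := div_mul_cancel₀ _ hnpos.ne'
      calc (z - x) ⬝ᵥ θh + c * ((z - x) ⬝ᵥ (V⁻¹ *ᵥ w))
          ≤ (z - x) ⬝ᵥ θh + c * (Real.sqrt ((z - x) ⬝ᵥ (V⁻¹ *ᵥ (z - x))) * n) := by linarith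
        _ = (z - x) ⬝ᵥ θh + Real.sqrt β * Real.sqrt ((z - x) ⬝ᵥ (V⁻¹ *ᵥ (z - x))) := by
            rw [← hcn]; ring
    have h4 : f y = (y - x) ⬝ᵥ θy := by
      rw [hy1, hwy]
      have hcn : c * n ^ 2 = Real.sqrt β * n := by
        rw [hc]; field_simp
      rw [hcn]
    have : (z - x) ⬝ᵥ θy ≤ (y - x) ⬝ᵥ θy := by linarith
    have hex : (z - x) ⬝ᵥ θy = z ⬝ᵥ θy - x ⬝ᵥ θy := by rw [sub_dotProduct]
    have hey : (y - x) ⬝ᵥ θy = y ⬝ᵥ θy - x ⬝ᵥ θy := by rw [sub_dotProduct]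
    linarith [hex ▸ this, hey ▸ this]
  have hyP : y ∈ P := Finset.mem_filter.mpr ⟨hyX, θy, hθyC, hymax⟩
  -- bound w ⬝ᵥ θh ≤ √β n using θx
  have hwθx : w ⬝ᵥ θx ≤ 0 := by
    have := hθxmax y hyX
    have h := sub_dotProduct y x θx
    rw [← hw] at h
    linarith [h]
  have hub : w ⬝ᵥ (θh - θx) ≤ n * Real.sqrt β := by
    have h1 : w ⬝ᵥ (θh - θx) = w ⬝ᵥ (V⁻¹ *ᵥ (V *ᵥ (θh - θx))) := by
      rw [mulVec_mulVec, nonsing_inv_mul V (isUnit_iff_ne_zero.mpr hV.det_pos.ne'), one_mulVec]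
    have h2 := cs_psd_s7 V⁻¹ hVi.posSemidef w (V *ᵥ (θh - θx))
    have h3 : (V *ᵥ (θh - θx)) ⬝ᵥ (V⁻¹ *ᵥ (V *ᵥ (θh - θx)))
        = (θh - θx) ⬝ᵥ (V *ᵥ (θh - θx)) := by
      rw [mulVec_mulVec, nonsing_inv_mul V (isUnit_iff_ne_zero.mpr hV.det_pos.ne'), one_mulVec]
      exact dotProduct_comm _ _
    rw [h3] at h2
    have h4 : (θh - θx) ⬝ᵥ (V *ᵥ (θh - θx)) ≤ β := by
      have hne : θh - θx = -(θx - θh) := by ring_nf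
      rw [hne, mulVec_neg, neg_dotProduct, dotProduct_neg, neg_neg]
      exact hθxC
    have h5 : Real.sqrt ((θh - θx) ⬝ᵥ (V *ᵥ (θh - θx))) ≤ Real.sqrt β :=
      Real.sqrt_le_sqrt h4
    calc w ⬝ᵥ (θh - θx) = w ⬝ᵥ (V⁻¹ *ᵥ (V *ᵥ (θh - θx))) := h1
      _ ≤ n * Real.sqrt ((θh - θx) ⬝ᵥ (V *ᵥ (θh - θx))) := by rw [hn] at *; exact h2
      _ ≤ n * Real.sqrt β := mul_le_mul_of_nonneg_left h5 hn0
  have hwθh : w ⬝ᵥ θh ≤ Real.sqrt β * n := by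
    have : w ⬝ᵥ (θh - θx) = w ⬝ᵥ θh - w ⬝ᵥ θx := by rw [dotProduct_sub]
    linarith [this ▸ hub]
  -- conclude
  have hfy : f y ≤ 2 * Real.sqrt β * n := by
    simp only [hf]
    rw [← hw, ← hn]; linarith
  have hle : n ≤ P.sup' hP fun y => Real.sqrt ((y - x) ⬝ᵥ (V⁻¹ *ᵥ (y - x))) := by
    rw [hn, hw]
    exact Finset.le_sup' (fun z => Real.sqrt ((z - x) ⬝ᵥ (V⁻¹ *ᵥ (z - x)))) hyP
  calc f y ≤ 2 * Real.sqrt β * n := hfy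
    _ ≤ _ := by
        apply mul_le_mul_of_nonneg_left hle
        positivity
end

section
/- Suppose X ⊂ ℝ^d is a finite nonempty action set, each x ∈ X has an observation matrix A_x ∈ ℝ^{d×m} with ‖A_x‖₂ ≤ 1, V ∈ ℝ^{d×d} is symmetric positive definite with V ⪰ I_d, θ̂ ∈ ℝ^d, and β > 0. Let C = {θ ∈ ℝ^d : (θ−θ̂)ᵀ V (θ−θ̂) ≤ β}, let P = {x ∈ X : there exists θ ∈ C with ⟨x,θ⟩ = max_{y∈X} ⟨y,θ⟩}, and suppose α > 0 is such that for every v ∈ ℝ^d and every x, y ∈ P there exists z ∈ P with ⟨x−y, v⟩² ≤ α·‖A_zᵀ v‖². Then for every x ∈ P, Δ(x)² ≤ 8·α·β·max_{z∈P} I(z), where Δ(x) = max_{y∈X} (⟨y−x, θ̂⟩ + √β·‖y−x‖_{V^{-1}}) and I(z) = log det(I_m + A_zᵀ V^{-1} A_z). -/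
open Matrix Finset Classical
open scoped MatrixOrder


-- basic dot product juggling
lemma dotmv {n k : ℕ} (Q : Matrix (Fin n) (Fin k) ℝ) (a : Fin k → ℝ) (b : Fin n → ℝ) :
    (Q *ᵥ a) ⬝ᵥ b = a ⬝ᵥ (Qᵀ *ᵥ b) := by
  rw [dotProduct_comm, dotProduct_mulVec, ← mulVec_transpose, dotProduct_comm]

lemma aux_cs {n : ℕ} {R : Matrix (Fin n) (Fin n) ℝ} (hR : R.PosSemidef) (v w : Fin n → ℝ) :
    (v ⬝ᵥ (R *ᵥ w))^2 ≤ (v ⬝ᵥ (R *ᵥ v)) * (w ⬝ᵥ (R *ᵥ w)) := by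
  set S := CFC.sqrt R with hSdef
  have hSS : S * S = R := CFC.sqrt_mul_sqrt_self R hR.nonneg
  have hST : Sᵀ = S := by
    have := (CFC.sqrt_nonneg R).posSemidef.isHermitian
    rwa [Matrix.IsHermitian, conjTranspose_eq_transpose_of_trivial] at this
  have key : ∀ a b : Fin n → ℝ, a ⬝ᵥ (R *ᵥ b) = (S *ᵥ a) ⬝ᵥ (S *ᵥ b) := by
    intro a b
    rw [dotmv, hST, mulVec_mulVec, hSS]
  rw [key v w, key v v, key w w]
  have h1 : ((S *ᵥ v) ⬝ᵥ (S *ᵥ w))^2 ≤ (∑ i, (S *ᵥ v) i ^ 2) * (∑ i, (S *ᵥ w) i ^ 2) :=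
    Finset.sum_mul_sq_le_sq_mul_sq Finset.univ _ _
  simpa [dotProduct, pow_two] using h1

lemma aux_quad_le_trace {n : ℕ} {M : Matrix (Fin n) (Fin n) ℝ} (hM : M.PosSemidef)
    (w : Fin n → ℝ) : w ⬝ᵥ (M *ᵥ w) ≤ (w ⬝ᵥ w) * M.trace := by
  set S := CFC.sqrt M with hSdef
  have hSS : S * S = M := CFC.sqrt_mul_sqrt_self M hM.nonneg
  have hST : Sᵀ = S := by
    have := (CFC.sqrt_nonneg M).posSemidef.isHermitian
    rwa [Matrix.IsHermitian, conjTranspose_eq_transpose_of_trivial] at this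
  have h1 : w ⬝ᵥ (M *ᵥ w) = (S *ᵥ w) ⬝ᵥ (S *ᵥ w) := by
    rw [dotmv, hST, mulVec_mulVec, hSS]
  have htr : M.trace = ∑ i, ∑ j, (S i j)^2 := by
    have hsym : ∀ i j, S j i = S i j := fun i j => congrFun (congrFun hST i) j
    rw [← hSS, Matrix.trace]
    simp [Matrix.diag, Matrix.mul_apply, pow_two, hsym]
  rw [h1, htr, dotProduct]
  have h2 : ∀ i, ((S *ᵥ w) i)^2 ≤ (∑ j, (S i j)^2) * (∑ j, (w j)^2) := by
    intro i
    have := Finset.sum_mul_sq_le_sq_mul_sq Finset.univ (fun j => S i j) w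
    simpa [Matrix.mulVec, dotProduct] using this
  calc (S *ᵥ w) ⬝ᵥ (S *ᵥ w) = ∑ i, ((S *ᵥ w) i)^2 := by simp [dotProduct, pow_two]
    _ ≤ ∑ i, (∑ j, (S i j)^2) * (∑ j, (w j)^2) := Finset.sum_le_sum fun i _ => h2 i
    _ = (∑ j, w j * w j) * ∑ i, ∑ j, (S i j)^2 := by
        rw [← Finset.sum_mul, mul_comm]; simp [pow_two]


lemma aux_log_lb {t : ℝ} (h0 : 0 ≤ t) (h1 : t ≤ 1) : t ≤ 2 * Real.log (1 + t) := by
  have hpos : (0:ℝ) < 1 + t := by linarith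
  have h := Real.log_le_sub_one_of_pos (inv_pos.mpr hpos)
  rw [Real.log_inv] at h
  have hc : (1 + t) * (1 + t)⁻¹ = 1 := mul_inv_cancel₀ (ne_of_gt hpos)
  nlinarith [h, hc, mul_pos hpos hpos]

lemma aux_trace_log {n : ℕ} {B : Matrix (Fin n) (Fin n) ℝ} (hB : B.PosSemidef)
    (hB1 : ((1 : Matrix (Fin n) (Fin n) ℝ) - B).PosSemidef) :
    0 ≤ B.trace ∧ B.trace ≤ 2 * Real.log ((1 + B).det) ∧ 0 ≤ Real.log ((1 + B).det) := by
  have hH : B.IsHermitian := hB.1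
  set lam := hH.eigenvalues with hlam
  have hlam0 : ∀ i, 0 ≤ lam i := hB.eigenvalues_nonneg
  have hlam1 : ∀ i, lam i ≤ 1 := by
    intro i
    have hu := hH.mulVec_eigenvectorBasis i
    set u : Fin n → ℝ := ⇑(hH.eigenvectorBasis i) with hudef
    have hune : u ≠ 0 := by
      have := hH.eigenvectorBasis.orthonormal.ne_zero i
      intro hc
      apply this
      ext j
      exact congrFun hc j
    have huu : 0 < u ⬝ᵥ u := by
      rcases Function.ne_iff.mp hune with ⟨j, hj⟩
      have : ∀ k, 0 ≤ u k * u k := fun k => mul_self_nonneg _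
      have hpos : 0 < u j * u j := by
        have := mul_self_pos.mpr hj
        simpa using this
      exact Finset.sum_pos' (fun k _ => this k) ⟨j, Finset.mem_univ j, hpos⟩
    have hq := hB1.dotProduct_mulVec_nonneg u
    have hquad : u ⬝ᵥ ((1 - B) *ᵥ u) = (1 - lam i) * (u ⬝ᵥ u) := by
      rw [sub_mulVec, dotProduct_sub, one_mulVec, hu]
      simp [dotProduct_smul, smul_eq_mul]
      ring
    simp only [star_trivial] at hq
    rw [hquad] at hq
    nlinarith
  -- unitary facts
  set U : Matrix (Fin n) (Fin n) ℝ := (hH.eigenvectorUnitary : Matrix (Fin n) (Fin n) ℝ) with hU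
  have hUU : U * star U = 1 := (Matrix.mem_unitaryGroup_iff).mp hH.eigenvectorUnitary.2
  have hUU' : star U * U = 1 := (Matrix.mem_unitaryGroup_iff').mp hH.eigenvectorUnitary.2
  have hspec : B = U * Matrix.diagonal lam * star U := by
    have := hH.spectral_theorem
    simpa [Function.comp] using this
  have htr : B.trace = ∑ i, lam i := by
    rw [hspec, Matrix.trace_mul_cycle, hUU', Matrix.one_mul,
      Matrix.trace_diagonal]
  have hdet : (1 + B).det = ∏ i, (1 + lam i) := by
    have h1 : (1 : Matrix (Fin n) (Fin n) ℝ) + B = U * (1 + Matrix.diagonal lam) * star U := by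
      rw [Matrix.mul_add, Matrix.add_mul, Matrix.mul_one, hUU, hspec]
    rw [h1, Matrix.det_mul, Matrix.det_mul]
    have : U.det * (1 + Matrix.diagonal lam).det * (star U).det
        = (1 + Matrix.diagonal lam).det * (U * star U).det := by
      rw [Matrix.det_mul]; ring
    rw [this, hUU, Matrix.det_one, mul_one]
    have hdiag : (1 : Matrix (Fin n) (Fin n) ℝ) + Matrix.diagonal lam
        = Matrix.diagonal (fun i => 1 + lam i) := by
      rw [← Matrix.diagonal_one, Matrix.diagonal_add]
    rw [hdiag, Matrix.det_diagonal]
  have hlog : Real.log ((1 + B).det) = ∑ i, Real.log (1 + lam i) := by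
    rw [hdet, Real.log_prod]
    intro i _
    have := hlam0 i; positivity
  refine ⟨?_, ?_, ?_⟩
  · rw [htr]
    exact Finset.sum_nonneg fun i _ => hlam0 i
  · rw [htr, hlog, Finset.mul_sum]
    exact Finset.sum_le_sum fun i _ => aux_log_lb (hlam0 i) (hlam1 i)
  · rw [hlog]
    exact Finset.sum_nonneg fun i _ => Real.log_nonneg (by linarith [hlam0 i])

lemma quad_sub_expand {d : ℕ} {V : Matrix (Fin d) (Fin d) ℝ} (hVT : Vᵀ = V)
    (a b : Fin d → ℝ) :
    (a - b) ⬝ᵥ (V *ᵥ (a - b))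
      = a ⬝ᵥ (V *ᵥ a) + b ⬝ᵥ (V *ᵥ b) - 2 * (a ⬝ᵥ (V *ᵥ b)) := by
  have hba : b ⬝ᵥ (V *ᵥ a) = a ⬝ᵥ (V *ᵥ b) := by rw [dotProduct_comm, dotmv, hVT]
  rw [Matrix.mulVec_sub, dotProduct_sub, sub_dotProduct, sub_dotProduct, hba]
  ring

/-- **Lemma 5 of the paper.** In a locally observable game with alignment
constant `α` for the plausible maximizer set `P`, every `x ∈ P` satisfies
`Δ(x)² ≤ 8 α β max_{z ∈ P} I(z)`, where `Δ` is the gap estimate and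
`I(z) = log det (I_m + A_zᵀ V⁻¹ A_z)` the information gain. -/
theorem stmt8 (d m : ℕ) (X : Finset (Fin d → ℝ)) (hX : X.Nonempty)
    (A : (Fin d → ℝ) → Matrix (Fin d) (Fin m) ℝ)
    (hA : ∀ x ∈ X, ((1 : Matrix (Fin m) (Fin m) ℝ) - (A x)ᵀ * A x).PosSemidef)
    (V : Matrix (Fin d) (Fin d) ℝ) (hVsymm : V.IsHermitian)
    (hVI : (V - (1 : Matrix (Fin d) (Fin d) ℝ)).PosSemidef)
    (θh : Fin d → ℝ) (β : ℝ) (hβ : 0 < β)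
    (hP : (X.filter fun a => ∃ θ : Fin d → ℝ,
        (θ - θh) ⬝ᵥ (V *ᵥ (θ - θh)) ≤ β ∧ ∀ y ∈ X, y ⬝ᵥ θ ≤ a ⬝ᵥ θ).Nonempty)
    (α : ℝ) (hα : 0 < α)
    (halign : ∀ v : Fin d → ℝ,
      ∀ x ∈ X.filter fun a => ∃ θ : Fin d → ℝ,
        (θ - θh) ⬝ᵥ (V *ᵥ (θ - θh)) ≤ β ∧ ∀ y ∈ X, y ⬝ᵥ θ ≤ a ⬝ᵥ θ,
      ∀ y ∈ X.filter fun a => ∃ θ : Fin d → ℝ,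
        (θ - θh) ⬝ᵥ (V *ᵥ (θ - θh)) ≤ β ∧ ∀ y' ∈ X, y' ⬝ᵥ θ ≤ a ⬝ᵥ θ,
      ∃ z ∈ X.filter fun a => ∃ θ : Fin d → ℝ,
        (θ - θh) ⬝ᵥ (V *ᵥ (θ - θh)) ≤ β ∧ ∀ y' ∈ X, y' ⬝ᵥ θ ≤ a ⬝ᵥ θ,
        ((x - y) ⬝ᵥ v) ^ 2 ≤ α * (((A z)ᵀ *ᵥ v) ⬝ᵥ ((A z)ᵀ *ᵥ v)))
    (x : Fin d → ℝ)
    (hx : x ∈ X.filter fun a => ∃ θ : Fin d → ℝ,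
        (θ - θh) ⬝ᵥ (V *ᵥ (θ - θh)) ≤ β ∧ ∀ y ∈ X, y ⬝ᵥ θ ≤ a ⬝ᵥ θ) :
    (X.sup' hX fun y =>
        (y - x) ⬝ᵥ θh + Real.sqrt β * Real.sqrt ((y - x) ⬝ᵥ (V⁻¹ *ᵥ (y - x)))) ^ 2 ≤
      8 * α * β *
        ((X.filter fun a => ∃ θ : Fin d → ℝ,
            (θ - θh) ⬝ᵥ (V *ᵥ (θ - θh)) ≤ β ∧ ∀ y ∈ X, y ⬝ᵥ θ ≤ a ⬝ᵥ θ).sup' hP fun z =>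
          Real.log (Matrix.det ((1 : Matrix (Fin m) (Fin m) ℝ) + (A z)ᵀ * V⁻¹ * A z))) := by
  classical
  set P := X.filter fun a => ∃ θ : Fin d → ℝ,
      (θ - θh) ⬝ᵥ (V *ᵥ (θ - θh)) ≤ β ∧ ∀ y ∈ X, y ⬝ᵥ θ ≤ a ⬝ᵥ θ with hPdef
  set f : (Fin d → ℝ) → ℝ := fun y =>
      (y - x) ⬝ᵥ θh + Real.sqrt β * Real.sqrt ((y - x) ⬝ᵥ (V⁻¹ *ᵥ (y - x))) with hf
  set I : (Fin d → ℝ) → ℝ := fun z =>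
      Real.log (Matrix.det ((1 : Matrix (Fin m) (Fin m) ℝ) + (A z)ᵀ * V⁻¹ * A z)) with hI
  have hxX : x ∈ X := (Finset.mem_filter.mp hx).1
  obtain ⟨θx, hθxC, hθxmax⟩ := (Finset.mem_filter.mp hx).2
  -- V is positive definite
  have hV : V.PosDef := by
    have h := Matrix.PosDef.posSemidef_add hVI Matrix.PosDef.one
    simpa using h
  have hVinv : V⁻¹.PosDef := hV.inv
  have hVdet : IsUnit V.det := isUnit_iff_ne_zero.mpr (ne_of_gt hV.det_pos)
  have hVmulinv : V * V⁻¹ = 1 := Matrix.mul_nonsing_inv V hVdet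
  have hVT : Vᵀ = V := by
    rwa [Matrix.IsHermitian, conjTranspose_eq_transpose_of_trivial] at hVsymm
  have hVinvT : V⁻¹ᵀ = V⁻¹ := by rw [Matrix.transpose_nonsing_inv, hVT]
  -- square root of V
  set S := CFC.sqrt V with hSdef
  have hSS : S * S = V := CFC.sqrt_mul_sqrt_self V hV.posSemidef.nonneg
  have hST : Sᵀ = S := by
    have := (CFC.sqrt_nonneg V).posSemidef.isHermitian
    rwa [Matrix.IsHermitian, conjTranspose_eq_transpose_of_trivial] at this
  have hSdet : IsUnit S.det := by
    have h1 : S.det * S.det = V.det := by rw [← Matrix.det_mul, hSS]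
    refine isUnit_iff_ne_zero.mpr fun hc => ?_
    rw [hc, mul_zero] at h1
    exact (ne_of_gt hV.det_pos) h1.symm
  have hSinvS : S⁻¹ * S = 1 := Matrix.nonsing_inv_mul S hSdet
  have hSSinv : S * S⁻¹ = 1 := Matrix.mul_nonsing_inv S hSdet
  have hSinvT : S⁻¹ᵀ = S⁻¹ := by rw [Matrix.transpose_nonsing_inv, hST]
  have hVinvSS : S⁻¹ * S⁻¹ = V⁻¹ := by rw [← Matrix.mul_inv_rev, hSS]
  -- 1 - V⁻¹ is positive semidefinite
  have h1Vinv : ((1 : Matrix (Fin d) (Fin d) ℝ) - V⁻¹).PosSemidef := by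
    set W := CFC.sqrt V⁻¹ with hWdef
    have hWW : W * W = V⁻¹ := CFC.sqrt_mul_sqrt_self V⁻¹ hVinv.posSemidef.nonneg
    have hWH : Wᴴ = W := (CFC.sqrt_nonneg V⁻¹).posSemidef.isHermitian
    have hWdet : IsUnit W.det := by
      have h1 : W.det * W.det = V⁻¹.det := by rw [← Matrix.det_mul, hWW]
      refine isUnit_iff_ne_zero.mpr fun hc => ?_
      rw [hc, mul_zero] at h1
      exact (ne_of_gt hVinv.det_pos) h1.symm
    have hWVW : W * V * W = 1 := by
      have hV' : V = W⁻¹ * W⁻¹ := by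
        rw [← Matrix.mul_inv_rev, hWW, Matrix.nonsing_inv_nonsing_inv V hVdet]
      rw [hV', ← Matrix.mul_assoc, Matrix.mul_nonsing_inv W hWdet,
        Matrix.one_mul, Matrix.nonsing_inv_mul W hWdet]
    have hpsd := hVI.conjTranspose_mul_mul_same W
    rw [hWH] at hpsd
    have heq : W * (V - 1) * W = 1 - V⁻¹ := by
      rw [Matrix.mul_sub, Matrix.mul_one, Matrix.sub_mul, hWVW, hWW]
    rwa [heq] at hpsd
  -- information-gain facts
  have hInfo : ∀ z ∈ X, 0 ≤ ((A z)ᵀ * V⁻¹ * A z).trace ∧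
      ((A z)ᵀ * V⁻¹ * A z).trace ≤ 2 * I z ∧ 0 ≤ I z := by
    intro z hz
    have hBpsd : ((A z)ᵀ * V⁻¹ * A z).PosSemidef := by
      have := hVinv.posSemidef.conjTranspose_mul_mul_same (A z)
      rwa [conjTranspose_eq_transpose_of_trivial] at this
    have h1B : ((1 : Matrix (Fin m) (Fin m) ℝ) - (A z)ᵀ * V⁻¹ * A z).PosSemidef := by
      have h2 := h1Vinv.conjTranspose_mul_mul_same (A z)
      rw [conjTranspose_eq_transpose_of_trivial] at h2
      have h3 := (hA z hz).add h2
      have heq : (1 - (A z)ᵀ * A z) + (A z)ᵀ * (1 - V⁻¹) * A z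
          = 1 - (A z)ᵀ * V⁻¹ * A z := by
        rw [Matrix.mul_sub, Matrix.mul_one, Matrix.sub_mul]
        abel
      rwa [heq] at h3
    exact aux_trace_log hBpsd h1B
  have hG0 : 0 ≤ P.sup' hP I := by
    obtain ⟨z0, hz0⟩ := hP
    have hz0X : z0 ∈ X := (Finset.mem_filter.mp hz0).1
    exact le_trans (hInfo z0 hz0X).2.2 (Finset.le_sup' I hz0)
  have hfx : f x = 0 := by simp [hf, sub_self]
  have hΔ0 : 0 ≤ X.sup' hX f := by rw [← hfx]; exact Finset.le_sup' f hxX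
  obtain ⟨y0, hy0X, hsup⟩ := Finset.exists_mem_eq_sup' hX f
  rw [hsup] at hΔ0 ⊢
  by_cases hy0 : y0 = x
  · subst hy0
    rw [hfx]
    have h0 : (0:ℝ) ≤ 8 * α * β * P.sup' hP I :=
      mul_nonneg (by positivity) hG0
    have h02 : (0:ℝ)^2 = 0 := by norm_num
    rw [h02]
    exact h0
  · have hwne : y0 - x ≠ 0 := sub_ne_zero.mpr hy0
    set wv := y0 - x with hwv
    have hρ2pos : 0 < wv ⬝ᵥ (V⁻¹ *ᵥ wv) := by
      have := hVinv.dotProduct_mulVec_pos hwne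
      simpa using this
    set ρ := Real.sqrt (wv ⬝ᵥ (V⁻¹ *ᵥ wv)) with hρ
    have hρpos : 0 < ρ := Real.sqrt_pos.mpr hρ2pos
    have hρsq : ρ^2 = wv ⬝ᵥ (V⁻¹ *ᵥ wv) := Real.sq_sqrt hρ2pos.le
    set c := Real.sqrt β / ρ with hc
    set θ' := θh + c • (V⁻¹ *ᵥ wv) with hθ'
    have hθ'sub : θ' - θh = c • (V⁻¹ *ᵥ wv) := by rw [hθ']; abel
    have hVu : V *ᵥ (V⁻¹ *ᵥ wv) = wv := by
      rw [Matrix.mulVec_mulVec, hVmulinv, Matrix.one_mulVec]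
    have hudot : (V⁻¹ *ᵥ wv) ⬝ᵥ wv = wv ⬝ᵥ (V⁻¹ *ᵥ wv) := by
      rw [dotmv, hVinvT]
    have hccρ : c * (c * ρ^2) = β := by
      have h1 : Real.sqrt β * Real.sqrt β = β := Real.mul_self_sqrt hβ.le
      rw [hc]
      field_simp
      linear_combination h1
    have hquadθ' : (θ' - θh) ⬝ᵥ (V *ᵥ (θ' - θh)) = β := by
      rw [hθ'sub, Matrix.mulVec_smul, hVu, smul_dotProduct, dotProduct_smul,
        smul_eq_mul, smul_eq_mul, hudot, ← hρsq, hccρ]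
    obtain ⟨y', hy'X, hy'max⟩ := Finset.exists_max_image X (fun y => y ⬝ᵥ θ') hX
    have hy'P : y' ∈ P := Finset.mem_filter.mpr
      ⟨hy'X, θ', le_of_eq hquadθ', fun y hy => hy'max y hy⟩
    have hdotθ' : wv ⬝ᵥ θ' = wv ⬝ᵥ θh + Real.sqrt β * ρ := by
      rw [hθ', dotProduct_add, dotProduct_smul, smul_eq_mul]
      congr 1
      rw [← hρsq, hc]
      field_simp
    have hfy0 : f y0 = wv ⬝ᵥ θh + Real.sqrt β * ρ := rfl
    have key1 : f y0 ≤ (y' - x) ⬝ᵥ (θ' - θx) := by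
      have hy'ge : y0 ⬝ᵥ θ' ≤ y' ⬝ᵥ θ' := hy'max y0 hy0X
      have hy'le : y' ⬝ᵥ θx ≤ x ⬝ᵥ θx := hθxmax y' hy'X
      have e1 : (y' - x) ⬝ᵥ (θ' - θx)
          = (y' ⬝ᵥ θ' - x ⬝ᵥ θ') - (y' ⬝ᵥ θx - x ⬝ᵥ θx) := by
        rw [sub_dotProduct, dotProduct_sub, dotProduct_sub]
        ring
      have e2 : f y0 = y0 ⬝ᵥ θ' - x ⬝ᵥ θ' := by
        rw [hfy0, ← hdotθ', hwv, sub_dotProduct]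
      rw [e1, e2]
      linarith
    obtain ⟨z, hzP, hz⟩ := halign (θ' - θx) y' hy'P x hx
    have hzX : z ∈ X := (Finset.mem_filter.mp hzP).1
    set v := θ' - θx with hv
    -- transfer the observation norm to a trace bound
    have hAA : ((A z)ᵀ *ᵥ v) ⬝ᵥ ((A z)ᵀ *ᵥ v) = v ⬝ᵥ ((A z * (A z)ᵀ) *ᵥ v) := by
      rw [dotmv, Matrix.transpose_transpose, Matrix.mulVec_mulVec]
    have hMpsd : (S⁻¹ * (A z * (A z)ᵀ) * S⁻¹).PosSemidef := by
      have h0 : (A z * (A z)ᵀ).PosSemidef := by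
        have := Matrix.posSemidef_self_mul_conjTranspose (A z)
        rwa [conjTranspose_eq_transpose_of_trivial] at this
      have := h0.conjTranspose_mul_mul_same S⁻¹
      rwa [conjTranspose_eq_transpose_of_trivial, hSinvT] at this
    have hmat : S * (S⁻¹ * (A z * (A z)ᵀ) * S⁻¹ * S) = A z * (A z)ᵀ := by
      rw [Matrix.mul_assoc (S⁻¹ * (A z * (A z)ᵀ)) S⁻¹ S, hSinvS, Matrix.mul_one,
        ← Matrix.mul_assoc, hSSinv, Matrix.one_mul]
    have hquadAA : v ⬝ᵥ ((A z * (A z)ᵀ) *ᵥ v)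
        = (S *ᵥ v) ⬝ᵥ ((S⁻¹ * (A z * (A z)ᵀ) * S⁻¹) *ᵥ (S *ᵥ v)) := by
      symm
      rw [Matrix.mulVec_mulVec, dotmv, hST, Matrix.mulVec_mulVec, hmat]
    have htrM : (S⁻¹ * (A z * (A z)ᵀ) * S⁻¹).trace = ((A z)ᵀ * V⁻¹ * A z).trace := by
      rw [Matrix.trace_mul_cycle S⁻¹ (A z * (A z)ᵀ) S⁻¹, hVinvSS,
        Matrix.trace_mul_cycle (A z)ᵀ V⁻¹ (A z), Matrix.trace_mul_comm]
    have hwnorm : (S *ᵥ v) ⬝ᵥ (S *ᵥ v) = v ⬝ᵥ (V *ᵥ v) := by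
      rw [dotmv, hST, Matrix.mulVec_mulVec, hSS]
    have key3 : ((A z)ᵀ *ᵥ v) ⬝ᵥ ((A z)ᵀ *ᵥ v)
        ≤ (v ⬝ᵥ (V *ᵥ v)) * ((A z)ᵀ * V⁻¹ * A z).trace := by
      rw [hAA, hquadAA, ← hwnorm, ← htrM]
      exact aux_quad_le_trace hMpsd _
    -- the confidence-width bound
    have hqb0 : 0 ≤ (θx - θh) ⬝ᵥ (V *ᵥ (θx - θh)) := by
      have := hV.posSemidef.dotProduct_mulVec_nonneg (θx - θh)
      simpa using this
    have hcs := aux_cs hV.posSemidef (θ' - θh) (θx - θh)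
    have hexp : v ⬝ᵥ (V *ᵥ v)
        = (θ' - θh) ⬝ᵥ (V *ᵥ (θ' - θh)) + (θx - θh) ⬝ᵥ (V *ᵥ (θx - θh))
          - 2 * ((θ' - θh) ⬝ᵥ (V *ᵥ (θx - θh))) := by
      have hv' : v = (θ' - θh) - (θx - θh) := by rw [hv]; abel
      rw [hv']
      exact quad_sub_expand hVT (θ' - θh) (θx - θh)
    have key4 : v ⬝ᵥ (V *ᵥ v) ≤ 4 * β := by
      rw [hquadθ'] at hcs
      rw [hexp, hquadθ']
      generalize hT : (θ' - θh) ⬝ᵥ (V *ᵥ (θx - θh)) = t at hcs ⊢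
      generalize hQ : (θx - θh) ⬝ᵥ (V *ᵥ (θx - θh)) = qb at hcs hθxC hqb0 ⊢
      nlinarith [hcs, hθxC, hqb0, hβ, sq_nonneg (t + β)]
    obtain ⟨htrB0, htrBle, hIz0⟩ := hInfo z hzX
    have key2 : ((y' - x) ⬝ᵥ v) ^ 2 ≤ α * (((A z)ᵀ *ᵥ v) ⬝ᵥ ((A z)ᵀ *ᵥ v)) := hz
    calc (f y0)^2 ≤ ((y' - x) ⬝ᵥ v)^2 := pow_le_pow_left₀ hΔ0 key1 2
      _ ≤ α * (((A z)ᵀ *ᵥ v) ⬝ᵥ ((A z)ᵀ *ᵥ v)) := key2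
      _ ≤ α * ((v ⬝ᵥ (V *ᵥ v)) * ((A z)ᵀ * V⁻¹ * A z).trace) :=
          mul_le_mul_of_nonneg_left key3 hα.le
      _ ≤ α * ((4 * β) * (2 * I z)) := by
          refine mul_le_mul_of_nonneg_left ?_ hα.le
          exact mul_le_mul key4 htrBle htrB0 (by positivity)
      _ = 8 * α * β * I z := by ring
      _ ≤ 8 * α * β * P.sup' hP I := by
          refine mul_le_mul_of_nonneg_left (Finset.le_sup' I hzP) (by positivity)
end

section
/- Let Y be a finite nonempty index set, and for each z ∈ Y let A_z ∈ ℝ^{d×m} be a matrix with ‖A_z‖₂ ≤ 1. Let V ∈ ℝ^{d×d} be symmetric with V ⪰ I_d, let w ∈ ℝ^d be nonzero, and suppose α > 0 is such that for every v ∈ ℝ^d there exists z ∈ Y with ⟨w, v⟩² ≤ α·‖A_zᵀ v‖². Then wᵀ V^{-1} w ≤ 2·α·max_{z∈Y} log((wᵀ V^{-1} w)/(wᵀ (V + A_z A_zᵀ)^{-1} w)). -/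
open Matrix Finset

section aux
variable {n k : Type*} [Fintype n] [Fintype k] [DecidableEq n] [DecidableEq k]

omit [DecidableEq n] [DecidableEq k] in
lemma quadform_transpose_mul (C : Matrix k n ℝ) (w : n → ℝ) :
    w ⬝ᵥ ((Cᵀ * C) *ᵥ w) = (C *ᵥ w) ⬝ᵥ (C *ᵥ w) := by
  rw [← mulVec_mulVec, dotProduct_mulVec, vecMul_transpose]

omit [DecidableEq n] [DecidableEq k] in
lemma psd_quad {M : Matrix n n ℝ} (hM : M.PosSemidef) (x : n → ℝ) :
    0 ≤ x ⬝ᵥ (M *ᵥ x) := by simpa using hM.dotProduct_mulVec_nonneg x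

omit [DecidableEq n] [DecidableEq k] in
lemma pd_quad {M : Matrix n n ℝ} (hM : M.PosDef) {x : n → ℝ} (hx : x ≠ 0) :
    0 < x ⬝ᵥ (M *ᵥ x) := by simpa using hM.dotProduct_mulVec_pos hx

omit [DecidableEq n] [DecidableEq k] in
lemma psd_smul {M : Matrix n n ℝ} (hM : M.PosSemidef) {c : ℝ} (hc : 0 ≤ c) :
    (c • M).PosSemidef := by
  have hMt : Mᵀ = M := by
    have := hM.1.eq
    rwa [Matrix.conjTranspose_eq_transpose_of_trivial] at this
  refine PosSemidef.of_dotProduct_mulVec_nonneg ?_ (fun x => ?_)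
  · simp [Matrix.IsHermitian, conjTranspose_smul, hMt]
  · rw [smul_mulVec, dotProduct_smul, smul_eq_mul]
    exact mul_nonneg hc (by simpa using hM.dotProduct_mulVec_nonneg x)

omit [DecidableEq n] in
/-- `0 ⪯ B ⪯ 1` implies `B² ⪯ 1`. -/
lemma one_sub_sq_psd {B : Matrix k k ℝ} (hB : B.PosSemidef)
    (h1B : ((1 : Matrix k k ℝ) - B).PosSemidef) :
    ((1 : Matrix k k ℝ) - B * B).PosSemidef := by
  obtain ⟨S, hSH, hSS⟩ : ∃ S : Matrix k k ℝ, S.IsHermitian ∧ S * S = B := by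
    open scoped MatrixOrder in
    exact ⟨CFC.sqrt B, (CFC.sqrt_nonneg B).posSemidef.isHermitian, CFC.sqrt_mul_sqrt_self B hB.nonneg⟩
  have key : (1 : Matrix k k ℝ) - B * B
      = ((1 : Matrix k k ℝ) - B) + S * ((1 : Matrix k k ℝ) - B) * S := by
    have h1 : S * ((1 : Matrix k k ℝ) - B) * S = B - B * B := by
      have h2 : S * ((1 : Matrix k k ℝ) - B) * S
          = S * S - S * B * S := by
        noncomm_ring
      rw [h2, hSS]
      congr 1
      calc S * B * S = S * (S * S) * S := by
            rw [hSS]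
        _ = (S * S) * (S * S) := by noncomm_ring
        _ = B * B := by rw [hSS]
    rw [h1]; abel
  rw [key]
  refine h1B.add ?_
  have := h1B.mul_mul_conjTranspose_same S
  rwa [hSH.eq] at this

omit [DecidableEq k] in
/-- `V ⪰ 1`, `V` PD implies `V⁻¹ ⪯ 1`. -/
lemma one_sub_inv_psd {V : Matrix n n ℝ} (hV : V.PosDef)
    (hVI : (V - (1 : Matrix n n ℝ)).PosSemidef) :
    ((1 : Matrix n n ℝ) - V⁻¹).PosSemidef := by
  have hdetu : IsUnit V.det := (Matrix.isUnit_iff_isUnit_det V).mp hV.isUnit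
  have hVinv : V * V⁻¹ = 1 := Matrix.mul_nonsing_inv V hdetu
  have hinvV : V⁻¹ * V = 1 := Matrix.nonsing_inv_mul V hdetu
  have hIH : V⁻¹.IsHermitian := hV.isHermitian.inv
  have hsum : (V - 1) * (V - 1) + (V - 1) = V * V - V := by noncomm_ring
  have hpsd : (V * V - V).PosSemidef := by
    rw [← hsum]
    refine PosSemidef.add ?_ hVI
    have := Matrix.posSemidef_conjTranspose_mul_self (V - 1)
    rwa [(hV.isHermitian.sub Matrix.isHermitian_one).eq] at this
  have key : V⁻¹ * (V * V - V) * V⁻¹ = (1 : Matrix n n ℝ) - V⁻¹ := by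
    rw [Matrix.mul_sub, Matrix.sub_mul, ← Matrix.mul_assoc, hinvV,
      Matrix.mul_assoc, hVinv, Matrix.mul_one, Matrix.one_mul]
  rw [← key]
  have := hpsd.mul_mul_conjTranspose_same V⁻¹
  rwa [hIH.eq] at this

lemma wmw_identity (V : Matrix n n ℝ) (A : Matrix n k ℝ)
    (hVinv : V * V⁻¹ = 1) (hinvV : V⁻¹ * V = 1) :
    (V + A * Aᵀ) * (V⁻¹ - (2⁻¹:ℝ) • (V⁻¹ * (A * Aᵀ) * V⁻¹)) * (V + A * Aᵀ) - (V + A * Aᵀ)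
      = (2⁻¹:ℝ) • (A * ((1 : Matrix k k ℝ) - (Aᵀ * V⁻¹ * A) * (Aᵀ * V⁻¹ * A)) * Aᵀ) := by
  have h1 : ∀ X : Matrix n n ℝ, V * (V⁻¹ * X) = X := fun X => by
    rw [← Matrix.mul_assoc, hVinv, Matrix.one_mul]
  have h2 : ∀ X : Matrix n n ℝ, V⁻¹ * (V * X) = X := fun X => by
    rw [← Matrix.mul_assoc, hinvV, Matrix.one_mul]
  simp only [Matrix.mul_add, Matrix.add_mul, Matrix.mul_sub, Matrix.sub_mul,
    smul_mul_assoc, mul_smul_comm, Matrix.mul_assoc, Matrix.mul_one, Matrix.one_mul,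
    h1, h2, hVinv, hinvV]
  module

end aux

/-- **Lemma lem:explore-direction.** Let `Y` be a finite nonempty index set of
actions with observation matrices `A_z` of operator norm at most `1` (encoded as
`A_zᵀ A_z ⪯ I_m`), let `V ⪰ I_d` be symmetric, `w ≠ 0`, and suppose `α > 0` is such that
for every `v` there is `z ∈ Y` with `⟨w, v⟩² ≤ α ‖A_zᵀ v‖²`. Then
`wᵀ V⁻¹ w ≤ 2 α max_{z ∈ Y} log ((wᵀ V⁻¹ w) / (wᵀ (V + A_z A_zᵀ)⁻¹ w))`. -/
theorem stmt10 {ι : Type*} (d m : ℕ) (Y : Finset ι) (hY : Y.Nonempty)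
    (A : ι → Matrix (Fin d) (Fin m) ℝ)
    (hA : ∀ z ∈ Y, ((1 : Matrix (Fin m) (Fin m) ℝ) - (A z)ᵀ * A z).PosSemidef)
    (V : Matrix (Fin d) (Fin d) ℝ) (hVsymm : V.IsHermitian)
    (hVI : (V - (1 : Matrix (Fin d) (Fin d) ℝ)).PosSemidef)
    (w : Fin d → ℝ) (hw : w ≠ 0) (α : ℝ) (hα : 0 < α)
    (halign : ∀ v : Fin d → ℝ, ∃ z ∈ Y,
      (w ⬝ᵥ v) ^ 2 ≤ α * (((A z)ᵀ *ᵥ v) ⬝ᵥ ((A z)ᵀ *ᵥ v))) :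
    w ⬝ᵥ (V⁻¹ *ᵥ w) ≤
      2 * α * Y.sup' hY fun z =>
        Real.log ((w ⬝ᵥ (V⁻¹ *ᵥ w)) / (w ⬝ᵥ ((V + A z * (A z)ᵀ)⁻¹ *ᵥ w))) := by
  classical
  -- V is positive definite
  have hVpd : V.PosDef := by
    have h := Matrix.PosDef.posSemidef_add hVI (Matrix.PosDef.one
      (R := ℝ) (n := Fin d))
    simpa using h
  have hUpd : V⁻¹.PosDef := hVpd.inv
  have hUt : V⁻¹ᵀ = V⁻¹ := by
    have := hUpd.isHermitian.eq
    rwa [Matrix.conjTranspose_eq_transpose_of_trivial] at this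
  have hdetV : IsUnit V.det := (Matrix.isUnit_iff_isUnit_det V).mp hVpd.isUnit
  have hVinv : V * V⁻¹ = 1 := Matrix.mul_nonsing_inv V hdetV
  have hinvV : V⁻¹ * V = 1 := Matrix.nonsing_inv_mul V hdetV
  set s := w ⬝ᵥ (V⁻¹ *ᵥ w) with hs_def
  have hs : 0 < s := pd_quad hUpd hw
  -- pick the aligned action
  obtain ⟨z, hz, hzineq⟩ := halign (V⁻¹ *ᵥ w)
  set Az := A z with hAz_def
  set u := Azᵀ *ᵥ (V⁻¹ *ᵥ w) with hu_def
  have hzineq' : s ^ 2 ≤ α * (u ⬝ᵥ u) := hzineq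
  -- B = Azᵀ V⁻¹ Az
  set B := Azᵀ * V⁻¹ * Az with hB_def
  have hBpsd : B.PosSemidef := by
    have := hUpd.posSemidef.conjTranspose_mul_mul_same Az
    rwa [Matrix.conjTranspose_eq_transpose_of_trivial] at this
  have h1B : ((1 : Matrix (Fin m) (Fin m) ℝ) - B).PosSemidef := by
    have e : (1 : Matrix (Fin m) (Fin m) ℝ) - B
        = ((1 : Matrix (Fin m) (Fin m) ℝ) - Azᵀ * Az)
          + Azᵀ * ((1 : Matrix (Fin d) (Fin d) ℝ) - V⁻¹) * Az := by
      rw [hB_def, Matrix.mul_sub, Matrix.sub_mul, Matrix.mul_one, Matrix.mul_assoc]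
      abel
    rw [e]
    refine (hA z hz).add ?_
    have := (one_sub_inv_psd hVpd hVI).conjTranspose_mul_mul_same Az
    rwa [Matrix.conjTranspose_eq_transpose_of_trivial] at this
  have h1BB := one_sub_sq_psd hBpsd h1B
  -- W = V + Az Azᵀ
  set W := V + Az * Azᵀ with hW_def
  have hWpd : W.PosDef := by
    refine Matrix.PosDef.add_posSemidef hVpd ?_
    have := Matrix.posSemidef_self_mul_conjTranspose Az
    rwa [Matrix.conjTranspose_eq_transpose_of_trivial] at this
  have hWH : W.IsHermitian := hWpd.isHermitian
  have hdetW : IsUnit W.det := (Matrix.isUnit_iff_isUnit_det W).mp hWpd.isUnit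
  have hWinv : W * W⁻¹ = 1 := Matrix.mul_nonsing_inv W hdetW
  have hinvW : W⁻¹ * W = 1 := Matrix.nonsing_inv_mul W hdetW
  have hWinvH : W⁻¹.IsHermitian := hWH.inv
  set M := V⁻¹ - (2⁻¹:ℝ) • (V⁻¹ * (Az * Azᵀ) * V⁻¹) with hM_def
  have hid : W * M * W - W
      = (2⁻¹:ℝ) • (Az * ((1 : Matrix (Fin m) (Fin m) ℝ) - B * B) * Azᵀ) := by
    rw [hM_def, hW_def, hB_def]
    exact wmw_identity V Az hVinv hinvV
  have hRpsd : (W * M * W - W).PosSemidef := by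
    rw [hid]
    refine psd_smul ?_ (by norm_num)
    have := h1BB.mul_mul_conjTranspose_same Az
    rwa [Matrix.conjTranspose_eq_transpose_of_trivial] at this
  have h2W : ∀ X : Matrix (Fin d) (Fin d) ℝ, W⁻¹ * (W * X) = X := fun X => by
    rw [← Matrix.mul_assoc, hinvW, Matrix.one_mul]
  have hMW : M - W⁻¹ = W⁻¹ * (W * M * W - W) * W⁻¹ := by
    simp only [Matrix.mul_sub, Matrix.sub_mul, Matrix.mul_assoc, hWinv,
      Matrix.mul_one, h2W]
  have hpsd2 : (M - W⁻¹).PosSemidef := by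
    rw [hMW]
    have := hRpsd.mul_mul_conjTranspose_same W⁻¹
    rwa [hWinvH.eq] at this
  have hq : 0 ≤ w ⬝ᵥ ((M - W⁻¹) *ᵥ w) := psd_quad hpsd2 w
  set t := w ⬝ᵥ (W⁻¹ *ᵥ w) with ht_def
  have htpos : 0 < t := pd_quad hWpd.inv hw
  -- quadratic form of M
  have hMquad : w ⬝ᵥ (M *ᵥ w) = s - 2⁻¹ * (u ⬝ᵥ u) := by
    have hCt : V⁻¹ * (Az * Azᵀ) * V⁻¹ = (Azᵀ * V⁻¹)ᵀ * (Azᵀ * V⁻¹) := by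
      rw [Matrix.transpose_mul, Matrix.transpose_transpose, hUt]
      simp only [Matrix.mul_assoc]
    have hu2 : (Azᵀ * V⁻¹) *ᵥ w = u := by rw [hu_def, mulVec_mulVec]
    rw [hM_def, Matrix.sub_mulVec, dotProduct_sub, smul_mulVec,
      dotProduct_smul, smul_eq_mul, hCt, quadform_transpose_mul, hu2]
  have ht_le : t ≤ s - 2⁻¹ * (u ⬝ᵥ u) := by
    have : w ⬝ᵥ ((M - W⁻¹) *ᵥ w) = w ⬝ᵥ (M *ᵥ w) - t := by
      rw [Matrix.sub_mulVec, dotProduct_sub]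
    rw [this, hMquad] at hq
    linarith
  -- scalar part
  have huu : s ^ 2 / α ≤ u ⬝ᵥ u := (div_le_iff₀ hα).mpr (by linarith [hzineq'])
  have hkey : t ≤ s - s ^ 2 / (2 * α) := by
    have : s ^ 2 / (2 * α) = 2⁻¹ * (s ^ 2 / α) := by ring
    nlinarith [ht_le, huu]
  have h2α : (0:ℝ) < 2 * α := by linarith
  have hx1 : s / (2 * α) < 1 := by
    have h1 : s ^ 2 / (2 * α) < s := by nlinarith
    rw [div_lt_one h2α]
    nlinarith [div_lt_iff₀ h2α |>.mp h1]
  have hts : t / s ≤ 1 - s / (2 * α) := by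
    rw [div_le_iff₀ hs]
    have : (1 - s / (2 * α)) * s = s - s ^ 2 / (2 * α) := by field_simp
    rw [this]; exact hkey
  have hlog : s / (2 * α) ≤ Real.log (s / t) := by
    have hts_pos : 0 < t / s := div_pos htpos hs
    have h1 := Real.log_le_sub_one_of_pos hts_pos
    have h2 : Real.log (t / s) ≤ Real.log (1 - s / (2 * α)) :=
      Real.log_le_log hts_pos hts
    have h3 : Real.log (1 - s / (2 * α)) ≤ - (s / (2 * α)) := by
      have hpos : 0 < 1 - s / (2 * α) := lt_of_lt_of_le hts_pos hts
      have := Real.log_le_sub_one_of_pos hpos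
      linarith
    have h4 : Real.log (s / t) = - Real.log (t / s) := by
      rw [Real.log_div hs.ne' htpos.ne', Real.log_div htpos.ne' hs.ne']; ring
    rw [h4]; linarith
  have hfinal : s ≤ 2 * α * Real.log (s / t) := by
    have := (div_le_iff₀ h2α).mp hlog
    linarith
  -- finish with the sup
  have hle := Finset.le_sup' (f := fun z =>
    Real.log ((w ⬝ᵥ (V⁻¹ *ᵥ w)) / (w ⬝ᵥ ((V + A z * (A z)ᵀ)⁻¹ *ᵥ w)))) hz
  calc s ≤ 2 * α * Real.log (s / t) := hfinal
    _ ≤ 2 * α * Y.sup' hY (fun z =>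
        Real.log ((w ⬝ᵥ (V⁻¹ *ᵥ w)) / (w ⬝ᵥ ((V + A z * (A z)ᵀ)⁻¹ *ᵥ w)))) := by
      exact mul_le_mul_of_nonneg_left hle (by linarith)
end

section
/- Let Z be a finite set and for each z ∈ Z let A_z ∈ ℝ^{d×m} be a matrix. Suppose B ∈ ℝ^{d×d} is invertible and each column of B is a column of A_{z} for some z ∈ Z (i.e. for every j ∈ {1,…,d} there exist z_j ∈ Z and a column index k_j with B e_j = A_{z_j} e_{k_j}). Then for every u ∈ ℝ^d with ‖u‖ ≤ 1 and every v ∈ ℝ^d, ⟨u, v⟩² · λ_min(B Bᵀ) ≤ d · max_{z∈Z} ‖A_zᵀ v‖². -/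
open Matrix Finset

lemma rayleigh_min {d : ℕ} (M : Matrix (Fin d) (Fin d) ℝ) (hM : M.IsHermitian)
    (v : Fin d → ℝ) : (⨅ i, hM.eigenvalues i) * (v ⬝ᵥ v) ≤ v ⬝ᵥ M *ᵥ v := by
  set U : Matrix (Fin d) (Fin d) ℝ := (hM.eigenvectorUnitary : Matrix (Fin d) (Fin d) ℝ) with hU
  have hUU : U * star U = 1 := Matrix.mem_unitaryGroup_iff.mp hM.eigenvectorUnitary.2
  set w : Fin d → ℝ := star U *ᵥ v with hw
  have hstar : star U = Uᵀ := by
    simp [Matrix.star_eq_conjTranspose, Matrix.conjTranspose_eq_transpose_of_trivial]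
  have hvM : v ⬝ᵥ M *ᵥ v = ∑ i, hM.eigenvalues i * (w i) ^ 2 := by
    conv_lhs => rw [hM.spectral_theorem, Unitary.conjStarAlgAut_apply]
    rw [← Matrix.mulVec_mulVec, ← Matrix.mulVec_mulVec, Matrix.dotProduct_mulVec,
      ← Matrix.mulVec_transpose, ← hstar, ← hw]
    simp [dotProduct, Matrix.mulVec_diagonal, sq]
    exact Finset.sum_congr rfl fun x _ => by ring
  have hvv : v ⬝ᵥ v = ∑ i, (w i) ^ 2 := by
    have : w ⬝ᵥ w = v ⬝ᵥ v := by
      rw [hw, hstar, Matrix.dotProduct_mulVec, Matrix.vecMul_transpose,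
        Matrix.mulVec_mulVec, ← hstar, hUU, Matrix.one_mulVec]
    rw [← this]
    simp [dotProduct, sq]
  rw [hvM, hvv, Finset.mul_sum]
  apply Finset.sum_le_sum
  intro i _
  have hle : (⨅ j, hM.eigenvalues j) ≤ hM.eigenvalues i :=
    ciInf_le (Set.Finite.bddBelow (Set.finite_range _)) i
  exact mul_le_mul_of_nonneg_right hle (sq_nonneg _)

/-- Let `B` be an invertible `d × d` matrix each of whose columns is a
column of some `A_z`, `z ∈ Z`. Then for every `u` with `‖u‖ ≤ 1` and every `v`,
`⟨u, v⟩² * λ_min(B Bᵀ) ≤ d * max_{z ∈ Z} ‖A_zᵀ v‖²`. -/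
theorem stmt13 {ι : Type*} (d m : ℕ) (Z : Finset ι) (hZ : Z.Nonempty)
    (A : ι → Matrix (Fin d) (Fin m) ℝ)
    (B : Matrix (Fin d) (Fin d) ℝ) (hB : IsUnit B.det)
    (hcols : ∀ j : Fin d, ∃ z ∈ Z, ∃ k : Fin m, ∀ i : Fin d, B i j = A z i k)
    (hH : (B * Bᵀ).IsHermitian)
    (u v : Fin d → ℝ) (hu : Real.sqrt (u ⬝ᵥ u) ≤ 1) :
    (u ⬝ᵥ v) ^ 2 * (⨅ i, hH.eigenvalues i) ≤
      (d : ℝ) * Z.sup' hZ (fun z => ((A z)ᵀ *ᵥ v) ⬝ᵥ ((A z)ᵀ *ᵥ v)) := by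
  -- λ_min ≥ 0
  have hpsd : (B * Bᵀ).PosSemidef := by
    have := Matrix.posSemidef_self_mul_conjTranspose B
    rwa [Matrix.conjTranspose_eq_transpose_of_trivial] at this
  have hlam : 0 ≤ ⨅ i, hH.eigenvalues i := by
    rcases isEmpty_or_nonempty (Fin d) with h | h
    · simp [iInf_of_empty, Real.sInf_empty]
    · exact le_ciInf fun i => hpsd.eigenvalues_nonneg i
  -- ⟨u,v⟩² ≤ v⬝v
  have huu : u ⬝ᵥ u ≤ 1 := by
    have h0 : 0 ≤ u ⬝ᵥ u := Finset.sum_nonneg fun i _ => mul_self_nonneg (u i)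
    nlinarith [Real.sq_sqrt h0, Real.sqrt_nonneg (u ⬝ᵥ u)]
  have hcs : (u ⬝ᵥ v) ^ 2 ≤ v ⬝ᵥ v := by
    have := Finset.sum_mul_sq_le_sq_mul_sq Finset.univ u v
    have hvv : 0 ≤ v ⬝ᵥ v := Finset.sum_nonneg fun i _ => mul_self_nonneg (v i)
    calc (u ⬝ᵥ v) ^ 2 ≤ (u ⬝ᵥ u) * (v ⬝ᵥ v) := by
          simpa [dotProduct, sq] using this
      _ ≤ 1 * (v ⬝ᵥ v) := mul_le_mul_of_nonneg_right huu hvv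
      _ = v ⬝ᵥ v := one_mul _
  -- Rayleigh
  have hray : (⨅ i, hH.eigenvalues i) * (v ⬝ᵥ v) ≤ v ⬝ᵥ (B * Bᵀ) *ᵥ v :=
    rayleigh_min _ hH v
  -- v⬝(BBᵀ)v = ‖Bᵀ v‖² = ∑ j, ((Bᵀ v) j)²
  have hBv : v ⬝ᵥ (B * Bᵀ) *ᵥ v = ∑ j, ((Bᵀ *ᵥ v) j) ^ 2 := by
    rw [← Matrix.mulVec_mulVec, Matrix.dotProduct_mulVec, ← Matrix.mulVec_transpose]
    simp [dotProduct, sq]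
  -- each term bounded by sup'
  have hterm : ∀ j : Fin d, ((Bᵀ *ᵥ v) j) ^ 2 ≤
      Z.sup' hZ (fun z => ((A z)ᵀ *ᵥ v) ⬝ᵥ ((A z)ᵀ *ᵥ v)) := by
    intro j
    obtain ⟨z, hz, k, hk⟩ := hcols j
    have h1 : (Bᵀ *ᵥ v) j = (((A z)ᵀ) *ᵥ v) k := by
      simp [Matrix.mulVec, dotProduct, Matrix.transpose_apply, hk]
    have h2 : ((((A z)ᵀ) *ᵥ v) k) ^ 2 ≤ ((A z)ᵀ *ᵥ v) ⬝ᵥ ((A z)ᵀ *ᵥ v) := by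
      rw [dotProduct]
      have := Finset.single_le_sum (f := fun k' => ((A z)ᵀ *ᵥ v) k' * ((A z)ᵀ *ᵥ v) k')
        (fun i _ => mul_self_nonneg _) (Finset.mem_univ k)
      simpa [sq] using this
    exact h1 ▸ (h2.trans (Finset.le_sup' (f := fun z => ((A z)ᵀ *ᵥ v) ⬝ᵥ ((A z)ᵀ *ᵥ v)) hz))
  have hsum : ∑ j : Fin d, ((Bᵀ *ᵥ v) j) ^ 2 ≤
      (d : ℝ) * Z.sup' hZ (fun z => ((A z)ᵀ *ᵥ v) ⬝ᵥ ((A z)ᵀ *ᵥ v)) := by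
    calc ∑ j : Fin d, ((Bᵀ *ᵥ v) j) ^ 2
        ≤ ∑ _j : Fin d, Z.sup' hZ (fun z => ((A z)ᵀ *ᵥ v) ⬝ᵥ ((A z)ᵀ *ᵥ v)) :=
          Finset.sum_le_sum fun j _ => hterm j
      _ = (d : ℝ) * Z.sup' hZ (fun z => ((A z)ᵀ *ᵥ v) ⬝ᵥ ((A z)ᵀ *ᵥ v)) := by
          simp [mul_comm]
  calc (u ⬝ᵥ v) ^ 2 * (⨅ i, hH.eigenvalues i)
      ≤ (v ⬝ᵥ v) * (⨅ i, hH.eigenvalues i) := mul_le_mul_of_nonneg_right hcs hlam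
    _ = (⨅ i, hH.eigenvalues i) * (v ⬝ᵥ v) := mul_comm _ _
    _ ≤ v ⬝ᵥ (B * Bᵀ) *ᵥ v := hray
    _ = ∑ j, ((Bᵀ *ᵥ v) j) ^ 2 := hBv
    _ ≤ _ := hsum
end

section
/- Let X ⊂ ℝ^d be a finite set and for each x ∈ X let A_x ∈ ℝ^{d×m} be a matrix. Let L = span of the union of the columns of all A_z, z ∈ X, and D = span{x − y : x, y ∈ X}. Then the following are equivalent: (i) for all x, y ∈ X, x − y ∈ L; (ii) for all x, y that are extreme points of the convex hull of X, x − y ∈ L; (iii) there exists a subset Y ⊆ X such that the span of the columns of the matrices A_x, x ∈ Y, contains D. -/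
open Matrix Finset

/-- The span of all columns of the observation matrices `A x` for `x` in a set `S`. -/
def colSpan (d m : ℕ) (A : (Fin d → ℝ) → Matrix (Fin d) (Fin m) ℝ)
    (S : Set (Fin d → ℝ)) : Submodule ℝ (Fin d → ℝ) :=
  Submodule.span ℝ {c | ∃ x ∈ S, ∃ j : Fin m, c = (A x)ᵀ j}

/-- If `x` is a convex combination of points `z i`, each of which satisfies `z i - y ∈ L`,
then `x - y ∈ L`. -/
lemma aux_comb {d : ℕ} (L : Submodule ℝ (Fin d → ℝ)) {ι : Type} (t : Finset ι)
    (w : ι → ℝ) (z : ι → (Fin d → ℝ)) (hw : ∑ i ∈ t, w i = 1) {x y : Fin d → ℝ}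
    (hx : ∑ i ∈ t, w i • z i = x) (h : ∀ i ∈ t, z i - y ∈ L) : x - y ∈ L := by
  have : x - y = ∑ i ∈ t, w i • (z i - y) := by
    simp only [smul_sub]
    rw [Finset.sum_sub_distrib, hx, ← Finset.sum_smul, hw, one_smul]
  rw [this]
  exact Submodule.sum_mem _ fun i hi => Submodule.smul_mem _ _ (h i hi)

/-- **Lemma lem:global-equivalence.** For a finite game the following are
equivalent: (i) all differences `x - y`, `x, y ∈ X`, lie in the span `L` of all columns of
the observation matrices; (ii) all differences of Pareto optimal actions (extreme points of
`conv X`) lie in `L`; (iii) there is a global observer set `Y ⊆ X`, i.e. a subset whose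
column span contains `D = span {x - y : x, y ∈ X}`. -/
theorem stmt14 (d m : ℕ) (X : Finset (Fin d → ℝ))
    (A : (Fin d → ℝ) → Matrix (Fin d) (Fin m) ℝ) :
    ((∀ x ∈ X, ∀ y ∈ X, x - y ∈ colSpan d m A (X : Set (Fin d → ℝ))) ↔
      (∀ x ∈ Set.extremePoints ℝ (convexHull ℝ (X : Set (Fin d → ℝ))),
        ∀ y ∈ Set.extremePoints ℝ (convexHull ℝ (X : Set (Fin d → ℝ))),
          x - y ∈ colSpan d m A (X : Set (Fin d → ℝ)))) ∧
    ((∀ x ∈ X, ∀ y ∈ X, x - y ∈ colSpan d m A (X : Set (Fin d → ℝ))) ↔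
      (∃ Y : Finset (Fin d → ℝ), Y ⊆ X ∧
        Submodule.span ℝ {c : Fin d → ℝ | ∃ x ∈ X, ∃ y ∈ X, c = x - y} ≤
          colSpan d m A (Y : Set (Fin d → ℝ)))) := by
  set L := colSpan d m A (X : Set (Fin d → ℝ)) with hL
  set E := Set.extremePoints ℝ (convexHull ℝ (X : Set (Fin d → ℝ))) with hE
  have hEX : E ⊆ (X : Set (Fin d → ℝ)) := extremePoints_convexHull_subset
  constructor
  · constructor
    · intro h x hx y hy
      exact h x (hEX hx) y (hEX hy)
    · -- hard direction: (ii) → (i)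
      intro h x hx y hy
      -- conv X = conv E
      have hcomp : IsCompact (convexHull ℝ (X : Set (Fin d → ℝ))) :=
        X.finite_toSet.isCompact_convexHull (𝕜 := ℝ)
      have hEfin : E.Finite := X.finite_toSet.subset hEX
      have hconvE : convexHull ℝ (X : Set (Fin d → ℝ)) = convexHull ℝ E := by
        have := closure_convexHull_extremePoints hcomp (convex_convexHull ℝ _)
        rw [← this, (hEfin.isClosed_convexHull (𝕜 := ℝ)).closure_eq]
      have key : ∀ z ∈ E, ∀ w ∈ X, z - w ∈ L := by
        intro z hz w hw
        have hwE : w ∈ convexHull ℝ E := hconvE ▸ subset_convexHull ℝ _ hw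
        rw [_root_.convexHull_eq] at hwE
        obtain ⟨ι, t, wt, zt, hw0, hw1, hzt, hcm⟩ := hwE
        rw [t.centerMass_eq_of_sum_1 _ hw1] at hcm
        have : w - z ∈ L := aux_comb L t wt zt hw1 hcm fun i hi => h _ (hzt i hi) _ hz
        simpa using L.neg_mem this
      have hxE : x ∈ convexHull ℝ E := hconvE ▸ subset_convexHull ℝ _ hx
      rw [_root_.convexHull_eq] at hxE
      obtain ⟨ι, t, wt, zt, hw0, hw1, hzt, hcm⟩ := hxE
      rw [t.centerMass_eq_of_sum_1 _ hw1] at hcm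
      exact aux_comb L t wt zt hw1 hcm fun i hi => key _ (hzt i hi) _ hy
  · constructor
    · intro h
      refine ⟨X, Finset.Subset.refl X, Submodule.span_le.2 ?_⟩
      rintro c ⟨x, hx, y, hy, rfl⟩
      exact h x hx y hy
    · rintro ⟨Y, hYX, hspan⟩ x hx y hy
      have h1 : x - y ∈ Submodule.span ℝ {c : Fin d → ℝ | ∃ x ∈ X, ∃ y ∈ X, c = x - y} :=
        Submodule.subset_span ⟨x, hx, y, hy, rfl⟩
      have h2 : colSpan d m A (Y : Set (Fin d → ℝ)) ≤ L :=
        Submodule.span_mono (by rintro c ⟨z, hz, j, rfl⟩; exact ⟨z, hYX hz, j, rfl⟩)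
      exact h2 (hspan h1)
end
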